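/- arXiv:2010.04121 — 5 statements merged into one kernel-verified Lean document; each statement's English description precedes it below -/
import Mathlib

section
/- Let V be the Volterra operator on L²[0,1]. Then the operator M := (I + V)⁻¹ exists, is a contraction (‖M‖ = 1), its spectrum is Spec(M) = {1}, but M ≠ I; consequently 1 is an isolated spectral point of M whose quasi-nilpotent part N = (1 − M)P (with P the Riesz projection, here P = I) is nonzero. -/
open MeasureTheory Set ComplexConjugate

set_option maxHeartbeats 1000000

noncomputable section

namespace Stmt2Proof

abbrev μ0 : Measure ℝ := volume.restrict (Set.Icc (0:ℝ) 1)

instance : IsProbabilityMeasure μ0 := by constructor; simp [Real.volume_Icc]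

lemma integrable_of_L2 (f : Lp ℂ 2 μ0) : Integrable (f : ℝ → ℂ) μ0 :=
  ((Lp.memLp f).mono_exponent (by norm_num)).integrable le_rfl

lemma integrable_conj_of_L2 (g : Lp ℂ 2 μ0) :
    Integrable (fun x => conj ((g : ℝ → ℂ) x)) μ0 := by
  have h := integrable_of_L2 g
  refine ⟨RCLike.continuous_conj.comp_aestronglyMeasurable h.1, ?_⟩
  simpa [HasFiniteIntegral] using h.2

lemma l1_le_l2 (f : Lp ℂ 2 μ0) : ∫ t, ‖(f : ℝ → ℂ) t‖ ∂μ0 ≤ ‖f‖ := by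
  rw [Lp.norm_def, integral_norm_eq_lintegral_enorm (Lp.aestronglyMeasurable f),
    ← eLpNorm_one_eq_lintegral_enorm]
  have h := eLpNorm_le_eLpNorm_of_exponent_le (μ := μ0) (f := (f : ℝ → ℂ))
    (by norm_num : (1:ENNReal) ≤ 2) (Lp.aestronglyMeasurable f)
  exact ENNReal.toReal_mono (Lp.eLpNorm_ne_top f) h

lemma sub_subset {x : ℝ} (hx : x ∈ Set.Icc (0:ℝ) 1) : Set.Ioc (0:ℝ) x ⊆ Set.Icc (0:ℝ) 1 :=
  fun t ht => ⟨le_of_lt ht.1, ht.2.trans hx.2⟩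

lemma restrict_eq {x : ℝ} (hx : x ∈ Set.Icc (0:ℝ) 1) :
    volume.restrict (Set.Ioc (0:ℝ) x) = μ0.restrict (Set.Ioc (0:ℝ) x) := by
  rw [Measure.restrict_restrict measurableSet_Ioc, Set.inter_eq_left.mpr (sub_subset hx)]

lemma ae_Ioc_of_ae {x : ℝ} (hx : x ∈ Set.Icc (0:ℝ) 1) {P : ℝ → Prop}
    (h : ∀ᵐ t ∂μ0, P t) : ∀ᵐ t ∂(volume.restrict (Set.Ioc (0:ℝ) x)), P t := by
  rw [restrict_eq hx]; exact ae_restrict_of_ae h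

/-- The iterated pointwise bound `|Vⁿ⁺¹f(x)| ≤ ‖f‖ xⁿ/n!`. -/
lemma pow_bound (V : Lp ℂ 2 μ0 →L[ℂ] Lp ℂ 2 μ0)
    (hV : ∀ f : Lp ℂ 2 μ0,
      (V f : ℝ → ℂ) =ᵐ[μ0] fun x => ∫ t in Set.Ioc (0 : ℝ) x, (f : ℝ → ℂ) t)
    (n : ℕ) (f : Lp ℂ 2 μ0) :
    ∀ᵐ x ∂μ0, ‖((V^(n+1)) f : ℝ → ℂ) x‖ ≤ ‖f‖ * x^n / n.factorial := by
  induction n with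
  | zero =>
    have h1 := hV f
    rw [pow_one]
    filter_upwards [h1, ae_restrict_mem measurableSet_Icc] with x hx hmem
    rw [hx]
    simp only [pow_zero, Nat.factorial_zero, Nat.cast_one, mul_one, div_one]
    calc ‖∫ t in Set.Ioc (0:ℝ) x, (f : ℝ → ℂ) t‖
        ≤ ∫ t in Set.Ioc (0:ℝ) x, ‖(f : ℝ → ℂ) t‖ := norm_integral_le_integral_norm _
      _ ≤ ∫ t in Set.Icc (0:ℝ) 1, ‖(f : ℝ → ℂ) t‖ := by
          have hi : IntegrableOn (fun t => ‖(f : ℝ → ℂ) t‖) (Set.Icc (0:ℝ) 1) volume :=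
            (integrable_of_L2 f).norm
          exact setIntegral_mono_set hi (Filter.Eventually.of_forall fun t => norm_nonneg _)
            (HasSubset.Subset.eventuallyLE (sub_subset hmem))
      _ ≤ ‖f‖ := l1_le_l2 f
  | succ n ih =>
    set g := (V^(n+1)) f with hg
    have hsucc : (V^(n+1+1)) f = V g := by
      rw [pow_succ']; rfl
    have h1 := hV g
    filter_upwards [hsucc ▸ h1, ae_restrict_mem measurableSet_Icc] with x hx hmem
    rw [hx]
    have hbd : ∀ᵐ t ∂(volume.restrict (Set.Ioc (0:ℝ) x)),
        ‖(g : ℝ → ℂ) t‖ ≤ ‖f‖ * t^n / n.factorial := by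
      apply ae_Ioc_of_ae hmem
      filter_upwards [ih] with t ht using ht
    have hx0 : (0:ℝ) ≤ x := hmem.1
    have hint : ∫ t in Set.Ioc (0:ℝ) x, (‖f‖ * t^n / n.factorial) =
        ‖f‖ * x^(n+1) / (n+1).factorial := by
      rw [← intervalIntegral.integral_of_le hx0]
      have : ∀ t : ℝ, ‖f‖ * t^n / n.factorial = (‖f‖ / n.factorial) * t^n := by
        intro t; ring
      simp_rw [this]
      rw [intervalIntegral.integral_const_mul, integral_pow]
      have hnf : ((n.factorial : ℝ)) ≠ 0 := Nat.cast_ne_zero.mpr n.factorial_ne_zero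
      rw [Nat.factorial_succ]
      push_cast
      rw [div_mul_div_comm, mul_comm ((n.factorial : ℝ)) ((n:ℝ)+1),
        zero_pow (Nat.succ_ne_zero n), sub_zero]
    calc ‖∫ t in Set.Ioc (0:ℝ) x, (g : ℝ → ℂ) t‖
        ≤ ∫ t in Set.Ioc (0:ℝ) x, ‖(g : ℝ → ℂ) t‖ := norm_integral_le_integral_norm _
      _ ≤ ∫ t in Set.Ioc (0:ℝ) x, (‖f‖ * t^n / n.factorial) := by
          apply integral_mono_of_nonneg
          · exact Filter.Eventually.of_forall fun t => norm_nonneg _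
          · exact Integrable.div_const
              ((intervalIntegral.intervalIntegrable_pow n |>.1).const_mul _) _
          · exact hbd
      _ = ‖f‖ * x^(n+1) / (n+1).factorial := hint

lemma measUniv : measureUnivNNReal μ0 = 1 := by
  simp [measureUnivNNReal, measure_univ]

lemma norm_pow_apply_le (V : Lp ℂ 2 μ0 →L[ℂ] Lp ℂ 2 μ0)
    (hV : ∀ f : Lp ℂ 2 μ0,
      (V f : ℝ → ℂ) =ᵐ[μ0] fun x => ∫ t in Set.Ioc (0 : ℝ) x, (f : ℝ → ℂ) t)
    (n : ℕ) (f : Lp ℂ 2 μ0) : ‖(V^(n+1)) f‖ ≤ (1 / n.factorial) * ‖f‖ := by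
  have hb : ∀ᵐ x ∂μ0, ‖((V^(n+1)) f : ℝ → ℂ) x‖ ≤ ‖f‖ / n.factorial := by
    filter_upwards [pow_bound V hV n f, ae_restrict_mem measurableSet_Icc] with x hx hmem
    refine hx.trans ?_
    rw [div_le_div_iff_of_pos_right (by positivity)]
    have : x^n ≤ 1 := pow_le_one₀ hmem.1 hmem.2
    nlinarith [norm_nonneg f]
  have := Lp.norm_le_of_ae_bound (f := (V^(n+1)) f)
    (by positivity : (0:ℝ) ≤ ‖f‖ / n.factorial) hb
  rw [measUniv] at this
  simpa [div_eq_mul_inv, mul_comm] using this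

lemma opnorm_pow (V : Lp ℂ 2 μ0 →L[ℂ] Lp ℂ 2 μ0)
    (hV : ∀ f : Lp ℂ 2 μ0,
      (V f : ℝ → ℂ) =ᵐ[μ0] fun x => ∫ t in Set.Ioc (0 : ℝ) x, (f : ℝ → ℂ) t)
    (n : ℕ) : ‖V^(n+1)‖ ≤ 1 / n.factorial :=
  ContinuousLinearMap.opNorm_le_bound _ (by positivity) (norm_pow_apply_le V hV n)

def one0 : Lp ℂ 2 μ0 :=
  indicatorConstLp 2 (measurableSet_Icc (a := (0:ℝ)) (b := 1)) (measure_ne_top μ0 _) (1:ℂ)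

lemma one0_coe : (one0 : ℝ → ℂ) =ᵐ[μ0] fun _ => 1 := by
  have h : (one0 : ℝ → ℂ) =ᵐ[μ0] (Set.Icc (0:ℝ) 1).indicator fun _ => (1:ℂ) := by
    unfold one0; exact indicatorConstLp_coeFn
  filter_upwards [h, ae_restrict_mem measurableSet_Icc] with x hx hmem
  rw [hx, Set.indicator_of_mem hmem]

lemma one0_ne : one0 ≠ 0 := by
  intro h
  have h2 : (one0 : ℝ → ℂ) =ᵐ[μ0] 0 := by rw [h]; exact Lp.coeFn_zero ℂ 2 μ0
  have h3 : (fun _ : ℝ => (1:ℂ)) =ᵐ[μ0] 0 := one0_coe.symm.trans h2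
  have h4 : ∀ᵐ _x ∂μ0, False := by
    filter_upwards [h3] with x hx
    simpa using hx
  rw [MeasureTheory.ae_iff] at h4
  simp only [not_false_iff, Set.setOf_true] at h4
  exact one_ne_zero ((measure_univ (μ := μ0)).symm.trans h4)

instance : Nontrivial (Lp ℂ 2 μ0) := ⟨one0, 0, one0_ne⟩

/-- `V` is quasinilpotent : its spectrum is `{0}`. -/
lemma spec_V (V : Lp ℂ 2 μ0 →L[ℂ] Lp ℂ 2 μ0)
    (hpow : ∀ n : ℕ, ‖V^(n+1)‖ ≤ 1 / n.factorial) : spectrum ℂ V = {0} := by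
  have hsub : spectrum ℂ V ⊆ {0} := by
    intro l hl
    by_contra hne
    have hl0 : l ≠ 0 := by simpa using hne
    have hpos : (0:ℝ) < ‖l‖ := norm_pos_iff.mpr hl0
    have key : ∀ n : ℕ, ‖l‖ ≤ (‖l‖⁻¹)^n / n.factorial := by
      intro n
      have hmem : l^(n+1) ∈ spectrum ℂ (V^(n+1)) :=
        spectrum.pow_image_subset V (n+1) ⟨l, hl, rfl⟩
      have h1 : ‖l‖^(n+1) ≤ 1 / n.factorial := by
        calc ‖l‖^(n+1) = ‖l^(n+1)‖ := (norm_pow l (n+1)).symm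
          _ ≤ ‖V^(n+1)‖ := spectrum.norm_le_norm_of_mem hmem
          _ ≤ 1 / n.factorial := hpow n
      have hln : ‖l‖^n ≠ 0 := by positivity
      have h2 : ‖l‖ = ‖l‖^(n+1) * (‖l‖⁻¹)^n := by
        rw [inv_pow, pow_succ, mul_comm (‖l‖^n) ‖l‖, mul_assoc, mul_inv_cancel₀ hln, mul_one]
      calc ‖l‖ = ‖l‖^(n+1) * (‖l‖⁻¹)^n := h2
        _ ≤ (1/n.factorial) * (‖l‖⁻¹)^n :=
            mul_le_mul_of_nonneg_right h1 (by positivity)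
        _ = (‖l‖⁻¹)^n / n.factorial := by rw [one_div]; ring
    have htend : Filter.Tendsto (fun n : ℕ => (‖l‖⁻¹)^n / n.factorial)
        Filter.atTop (nhds 0) := FloorSemiring.tendsto_pow_div_factorial_atTop _
    have : ‖l‖ ≤ 0 := ge_of_tendsto' htend key
    linarith
  obtain ⟨z, hz⟩ := spectrum.nonempty V
  have hz0 := hsub hz
  rw [Set.mem_singleton_iff] at hz0
  refine Set.Subset.antisymm hsub ?_
  intro y hy
  rw [Set.mem_singleton_iff] at hy
  rw [hy, ← hz0]
  exact hz

lemma spec_one_add (V : Lp ℂ 2 μ0 →L[ℂ] Lp ℂ 2 μ0)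
    (hs : spectrum ℂ V = {0}) : spectrum ℂ (1 + V) = {1} := by
  have h2 := spectrum.singleton_add_eq V (1:ℂ)
  rw [map_one, hs] at h2
  rw [← h2]
  simp

lemma unit_one_add (V : Lp ℂ 2 μ0 →L[ℂ] Lp ℂ 2 μ0)
    (hs : spectrum ℂ (1 + V) = {1}) : IsUnit (1 + V) := by
  apply spectrum.isUnit_of_zero_notMem (R := ℂ)
  rw [hs]
  simp

lemma spec_M (V : Lp ℂ 2 μ0 →L[ℂ] Lp ℂ 2 μ0)
    (hs : spectrum ℂ (1 + V) = {1}) (hu : IsUnit (1 + V)) :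
    spectrum ℂ (Ring.inverse (1 + V)) = {1} := by
  have h1 : Ring.inverse (1 + V) = ↑hu.unit⁻¹ := by
    rw [← Ring.inverse_unit hu.unit, hu.unit_spec]
  rw [h1, ← spectrum.map_inv, hu.unit_spec, hs]
  simp

lemma norm_M_ge (V : Lp ℂ 2 μ0 →L[ℂ] Lp ℂ 2 μ0)
    (hs : spectrum ℂ (Ring.inverse (1 + V)) = {1}) :
    1 ≤ ‖Ring.inverse (1 + V)‖ := by
  have : (1:ℂ) ∈ spectrum ℂ (Ring.inverse (1 + V)) := by rw [hs]; rfl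
  simpa using spectrum.norm_le_norm_of_mem this

lemma ae_ne_zero : ∀ᵐ t ∂μ0, t ≠ 0 := by
  have : μ0 {(0:ℝ)} = 0 := measure_singleton 0
  rw [MeasureTheory.ae_iff]
  simpa using this

lemma diag_null : (μ0.prod μ0) {p : ℝ × ℝ | p.1 = p.2} = 0 := by
  have hm : MeasurableSet {p : ℝ × ℝ | p.1 = p.2} :=
    measurableSet_eq_fun measurable_fst measurable_snd
  rw [Measure.prod_apply hm]
  have : ∀ x : ℝ, (Prod.mk x ⁻¹' {p : ℝ × ℝ | p.1 = p.2}) = {x} := by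
    intro x; ext t; simp [eq_comm]
  simp [this, measure_singleton]

/-- `V + V*` is positive: `Re ⟪g, Vg⟫ = |∫ g|²/2 ≥ 0`, via a Fubini symmetrization. -/
lemma re_inner_nonneg (V : Lp ℂ 2 μ0 →L[ℂ] Lp ℂ 2 μ0)
    (hV : ∀ f : Lp ℂ 2 μ0,
      (V f : ℝ → ℂ) =ᵐ[μ0] fun x => ∫ t in Set.Ioc (0 : ℝ) x, (f : ℝ → ℂ) t)
    (g : Lp ℂ 2 μ0) : 0 ≤ RCLike.re (inner ℂ g (V g) : ℂ) := by
  classical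
  set K : ℝ × ℝ → ℂ := fun p => conj ((g : ℝ → ℂ) p.1) * (g : ℝ → ℂ) p.2 with hK
  have hKint : Integrable K (μ0.prod μ0) :=
    (integrable_conj_of_L2 g).mul_prod (integrable_of_L2 g)
  have hmle : MeasurableSet {p : ℝ × ℝ | p.2 ≤ p.1} :=
    measurableSet_le measurable_snd measurable_fst
  have hmge : MeasurableSet {p : ℝ × ℝ | p.1 ≤ p.2} :=
    measurableSet_le measurable_fst measurable_snd
  set F : ℝ × ℝ → ℂ := Set.indicator {p : ℝ × ℝ | p.2 ≤ p.1} K with hF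
  set F' : ℝ × ℝ → ℂ := Set.indicator {p : ℝ × ℝ | p.1 ≤ p.2} K with hF'
  have hFint : Integrable F (μ0.prod μ0) := hKint.indicator hmle
  have hF'int : Integrable F' (μ0.prod μ0) := hKint.indicator hmge
  -- Step A+B : inner ℂ g (V g) = ∫ F d(μ0.prod μ0)
  have hstep1 : (inner ℂ g (V g) : ℂ) = ∫ p, F p ∂(μ0.prod μ0) := by
    rw [MeasureTheory.L2.inner_def]
    have hA : ∫ x, (inner ℂ ((g : ℝ → ℂ) x) ((V g : ℝ → ℂ) x) : ℂ) ∂μ0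
        = ∫ x, (∫ t, F (x, t) ∂μ0) ∂μ0 := by
      apply integral_congr_ae
      filter_upwards [hV g, ae_restrict_mem measurableSet_Icc] with x hx hmem
      rw [RCLike.inner_apply', hx]
      have h1 : ∫ t in Set.Ioc (0:ℝ) x, (g : ℝ → ℂ) t
          = ∫ t in Set.Ioc (0:ℝ) x, (g : ℝ → ℂ) t ∂μ0 := by
        rw [restrict_eq hmem]
      rw [h1, ← integral_indicator measurableSet_Ioc, ← integral_const_mul]
      apply integral_congr_ae
      filter_upwards [ae_ne_zero, ae_restrict_mem measurableSet_Icc] with t ht0 htmem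
      by_cases hle : t ≤ x
      · have htIoc : t ∈ Set.Ioc (0:ℝ) x := ⟨lt_of_le_of_ne htmem.1 (Ne.symm ht0), hle⟩
        rw [Set.indicator_of_mem htIoc]
        have : ((x, t) : ℝ × ℝ) ∈ {p : ℝ × ℝ | p.2 ≤ p.1} := hle
        rw [hF, Set.indicator_of_mem this]
      · have htIoc : t ∉ Set.Ioc (0:ℝ) x := fun h => hle h.2
        rw [Set.indicator_of_notMem htIoc]
        have : ((x, t) : ℝ × ℝ) ∉ {p : ℝ × ℝ | p.2 ≤ p.1} := hle
        rw [hF, Set.indicator_of_notMem this, mul_zero]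
    rw [hA]
    exact MeasureTheory.integral_integral hFint
  -- Step C : the complex conjugate of the integral
  have hstep2 : conj (∫ p, F p ∂(μ0.prod μ0)) = ∫ p, F' p ∂(μ0.prod μ0) := by
    rw [← integral_conj]
    have hpt : ∀ p : ℝ × ℝ, conj (F p) = F' (Prod.swap p) := by
      intro p
      by_cases h : p.2 ≤ p.1 <;>
        simp [hF, hF', hK, Set.indicator_apply, h, mul_comm]
    simp_rw [hpt]
    exact integral_prod_swap F'
  -- Step D : F + F' = K + indicator of the diagonal
  have hD : ∀ p : ℝ × ℝ, F p + F' p = K p + Set.indicator {p : ℝ × ℝ | p.1 = p.2} K p := by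
    intro p
    rcases lt_trichotomy p.1 p.2 with h | h | h
    · simp [hF, hF', Set.indicator_apply, le_of_lt h, not_le.mpr h, ne_of_lt h]
    · simp [hF, hF', Set.indicator_apply, le_of_eq h, le_of_eq h.symm, h]
    · simp [hF, hF', Set.indicator_apply, le_of_lt h, not_le.mpr h, ne_of_gt h]
  have hdiagint : ∫ p, Set.indicator {p : ℝ × ℝ | p.1 = p.2} K p ∂(μ0.prod μ0) = 0 := by
    rw [integral_indicator (measurableSet_eq_fun measurable_fst measurable_snd)]
    rw [Measure.restrict_eq_zero.mpr diag_null]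
    exact integral_zero_measure _
  have hKeq : ∫ p, K p ∂(μ0.prod μ0)
      = conj (∫ x, (g : ℝ → ℂ) x ∂μ0) * (∫ x, (g : ℝ → ℂ) x ∂μ0) := by
    have h2 := integral_prod_mul (μ := μ0) (ν := μ0)
      (fun x => conj ((g : ℝ → ℂ) x)) (fun x => (g : ℝ → ℂ) x)
    rw [integral_conj] at h2
    rw [hK]
    exact h2
  -- combine
  set I : ℂ := ∫ p, F p ∂(μ0.prod μ0) with hI
  have hsum : I + conj I
      = conj (∫ x, (g : ℝ → ℂ) x ∂μ0) * (∫ x, (g : ℝ → ℂ) x ∂μ0) := by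
    rw [hstep2, hI, ← integral_add hFint hF'int]
    have : ∀ p : ℝ × ℝ, F p + F' p = K p + Set.indicator {p : ℝ × ℝ | p.1 = p.2} K p := hD
    simp_rw [this]
    rw [integral_add hKint (hKint.indicator (measurableSet_eq_fun measurable_fst measurable_snd)),
      hdiagint, add_zero, hKeq]
  have hre : 2 * I.re = Complex.normSq (∫ x, (g : ℝ → ℂ) x ∂μ0) := by
    have h1 : I + conj I = ((2 * I.re : ℝ) : ℂ) := Complex.add_conj I
    rw [hsum] at h1
    have h2 : conj (∫ x, (g : ℝ → ℂ) x ∂μ0) * (∫ x, (g : ℝ → ℂ) x ∂μ0)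
        = ((Complex.normSq (∫ x, (g : ℝ → ℂ) x ∂μ0) : ℝ) : ℂ) := by
      rw [mul_comm, Complex.mul_conj]
    rw [h2] at h1
    exact_mod_cast h1.symm
  have hfin : RCLike.re (inner ℂ g (V g) : ℂ) = I.re := by
    rw [hstep1]; exact RCLike.re_to_complex
  rw [hfin]
  nlinarith [Complex.normSq_nonneg (∫ x, (g : ℝ → ℂ) x ∂μ0)]

lemma norm_le_one_add (V : Lp ℂ 2 μ0 →L[ℂ] Lp ℂ 2 μ0)
    (hre : ∀ g : Lp ℂ 2 μ0, 0 ≤ RCLike.re (inner ℂ g (V g) : ℂ))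
    (g : Lp ℂ 2 μ0) : ‖g‖ ≤ ‖(1 + V) g‖ := by
  have happ : (1 + V) g = g + V g := by
    rw [ContinuousLinearMap.add_apply, ContinuousLinearMap.one_apply]
  rw [happ]
  have hsq : ‖g + V g‖^2 = ‖g‖^2 + 2 * RCLike.re (inner ℂ g (V g) : ℂ) + ‖V g‖^2 :=
    norm_add_sq (𝕜 := ℂ) g (V g)
  have h1 : ‖g‖^2 ≤ ‖g + V g‖^2 := by
    rw [hsq]
    nlinarith [hre g, norm_nonneg (V g), sq_nonneg ‖V g‖]
  nlinarith [norm_nonneg g, norm_nonneg (g + V g)]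

lemma norm_M_le (V : Lp ℂ 2 μ0 →L[ℂ] Lp ℂ 2 μ0) (hu : IsUnit (1 + V))
    (hc : ∀ g : Lp ℂ 2 μ0, ‖g‖ ≤ ‖(1 + V) g‖) :
    ‖Ring.inverse (1 + V)‖ ≤ 1 := by
  apply ContinuousLinearMap.opNorm_le_bound _ zero_le_one
  intro f
  have hmul : (1 + V) * Ring.inverse (1 + V) = 1 := Ring.mul_inverse_cancel _ hu
  have happ : (1 + V) (Ring.inverse (1 + V) f) = f := by
    have := congrArg (fun T : Lp ℂ 2 μ0 →L[ℂ] Lp ℂ 2 μ0 => T f) hmul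
    simpa [ContinuousLinearMap.mul_apply] using this
  calc ‖Ring.inverse (1 + V) f‖ ≤ ‖(1 + V) (Ring.inverse (1 + V) f)‖ := hc _
    _ = ‖f‖ := by rw [happ]
    _ = 1 * ‖f‖ := (one_mul _).symm

lemma V_ne_zero (V : Lp ℂ 2 μ0 →L[ℂ] Lp ℂ 2 μ0)
    (hV : ∀ f : Lp ℂ 2 μ0,
      (V f : ℝ → ℂ) =ᵐ[μ0] fun x => ∫ t in Set.Ioc (0 : ℝ) x, (f : ℝ → ℂ) t) :
    V ≠ 0 := by
  intro h0
  have h1 : ∀ᵐ x ∂μ0, (0 : ℂ) = ∫ t in Set.Ioc (0:ℝ) x, (one0 : ℝ → ℂ) t := by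
    have h2 := hV one0
    rw [h0] at h2
    have h3 : ((0 : Lp ℂ 2 μ0 →L[ℂ] Lp ℂ 2 μ0) one0 : ℝ → ℂ) =ᵐ[μ0] 0 := by
      rw [ContinuousLinearMap.zero_apply]; exact Lp.coeFn_zero ℂ 2 μ0
    filter_upwards [h2, h3] with x hx hx0
    have : (0:ℂ) = ((0 : Lp ℂ 2 μ0 →L[ℂ] Lp ℂ 2 μ0) one0 : ℝ → ℂ) x := by
      rw [hx0]; rfl
    rw [this, hx]
  have h4 : ∀ᵐ (x : ℝ) ∂μ0, (x : ℂ) = 0 := by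
    filter_upwards [h1, ae_restrict_mem measurableSet_Icc] with x hx hmem
    have h5 : ∫ t in Set.Ioc (0:ℝ) x, (one0 : ℝ → ℂ) t
        = ∫ t in Set.Ioc (0:ℝ) x, (1:ℂ) := by
      apply integral_congr_ae
      rw [restrict_eq hmem]
      exact ae_restrict_of_ae one0_coe
    rw [h5, setIntegral_const] at hx
    have h6 : ((volume (Set.Ioc (0:ℝ) x)).toReal • (1:ℂ)) = (x:ℂ) := by
      simp [Real.volume_Ioc, hmem.1]
    rw [← h6]
    exact hx.symm
  have h6 : μ0 {x : ℝ | ¬ ((x:ℂ) = 0)} = 0 := by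
    rw [← MeasureTheory.ae_iff]; exact h4
  have h7 : μ0 (Set.Ioc (0:ℝ) 1) ≤ μ0 {x : ℝ | ¬ ((x:ℂ) = 0)} := by
    apply measure_mono
    intro x hx
    simp only [Set.mem_setOf_eq, Complex.ofReal_eq_zero]
    exact ne_of_gt hx.1
  rw [h6] at h7
  have h8 : μ0 (Set.Ioc (0:ℝ) 1) = 1 := by
    rw [Measure.restrict_apply measurableSet_Ioc,
      Set.inter_eq_left.mpr Set.Ioc_subset_Icc_self]
    simp [Real.volume_Ioc]
  rw [h8] at h7
  exact (by norm_num : ¬ ((1:ENNReal) ≤ 0)) h7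

lemma M_ne_one (V : Lp ℂ 2 μ0 →L[ℂ] Lp ℂ 2 μ0) (hu : IsUnit (1 + V)) (hVne : V ≠ 0) :
    Ring.inverse (1 + V) ≠ 1 := by
  intro h
  have hmul : (1 + V) * Ring.inverse (1 + V) = 1 := Ring.mul_inverse_cancel _ hu
  rw [h, mul_one] at hmul
  exact hVne (by rwa [add_eq_left] at hmul)

end Stmt2Proof

end

open MeasureTheory

/-- For the Volterra operator `V` on `L²[0,1]`, the operator
`M := (I + V)⁻¹` exists, has norm `‖M‖ = 1` (a contraction), its spectrum is `{1}`,
but `M ≠ I`; consequently the quasi-nilpotent part `N = (1 - M)P` at the isolated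
spectral point `1` (where the Riesz projection `P` equals the identity since
`Spec(M) = {1}`) is nonzero, i.e. `1 - M ≠ 0`. -/
theorem stmt2
    (μ : Measure ℝ) (hμ : μ = volume.restrict (Set.Icc (0 : ℝ) 1))
    (V : Lp ℂ 2 μ →L[ℂ] Lp ℂ 2 μ)
    (hV : ∀ f : Lp ℂ 2 μ,
      (V f : ℝ → ℂ) =ᵐ[μ] fun x => ∫ t in Set.Ioc (0 : ℝ) x, (f : ℝ → ℂ) t) :
    IsUnit (1 + V) ∧
    ‖Ring.inverse (1 + V)‖ = 1 ∧
    spectrum ℂ (Ring.inverse (1 + V)) = {1} ∧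
    Ring.inverse (1 + V) ≠ 1 ∧
    1 - Ring.inverse (1 + V) ≠ 0 := by
  subst hμ
  have hspecV : spectrum ℂ V = {0} :=
    Stmt2Proof.spec_V V (fun n => Stmt2Proof.opnorm_pow V hV n)
  have hspec1 : spectrum ℂ (1 + V) = {1} := Stmt2Proof.spec_one_add V hspecV
  have hu : IsUnit (1 + V) := Stmt2Proof.unit_one_add V hspec1
  have hspecM : spectrum ℂ (Ring.inverse (1 + V)) = {1} := Stmt2Proof.spec_M V hspec1 hu
  have hge : 1 ≤ ‖Ring.inverse (1 + V)‖ := Stmt2Proof.norm_M_ge V hspecM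
  have hle : ‖Ring.inverse (1 + V)‖ ≤ 1 :=
    Stmt2Proof.norm_M_le V hu
      (Stmt2Proof.norm_le_one_add V (Stmt2Proof.re_inner_nonneg V hV))
  have hne : Ring.inverse (1 + V) ≠ 1 :=
    Stmt2Proof.M_ne_one V hu (Stmt2Proof.V_ne_zero V hV)
  exact ⟨hu, le_antisymm hle hge, hspecM, hne, sub_ne_zero_of_ne (Ne.symm hne)⟩
end

section
/- Let ℒ be the generator of a strongly continuous contraction semigroup on a Banach space X, and for k ∈ ℕ let ℒ_k = kℒ(k − ℒ)⁻¹ be the k-th Yosida approximant. If B ∈ B(X) is such that Bℒ and ℒB are densely defined and bounded, then ‖Bℒ_k B − BℒB‖ ≤ C/k for a constant C independent of k, where the bounded operators are identified with their unique bounded extensions. -/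
/-- Let `L` be the (possibly unbounded, densely defined) generator of a
strongly continuous contraction semigroup, encoded via its resolvents
`R k = (k - L)⁻¹` with `‖R k‖ ≤ 1/k`, and let `L_k = k L (k - L)⁻¹ = k² R k - k·1` be
the `k`-th Yosida approximant. If `B` is bounded and `B L`, `L B` are densely defined
and bounded (with bounded extensions `BL`, `LB`), then
`‖B L_k B - B L B‖ ≤ C / k` for a constant `C` independent of `k`,
where `B L B` is identified with its unique bounded extension `B ∘ LB`. -/
theorem stmt4 {X : Type*} [NormedAddCommGroup X] [NormedSpace ℂ X] [CompleteSpace X]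
    (L : X →ₗ.[ℂ] X) (hdense : Dense (L.domain : Set X))
    (R : ℕ → X →L[ℂ] X)
    (hRmem : ∀ k : ℕ, 0 < k → ∀ x : X, R k x ∈ L.domain)
    (hRright : ∀ (k : ℕ) (hk : 0 < k) (x : X),
      (k : ℂ) • (R k x) - L ⟨R k x, hRmem k hk x⟩ = x)
    (hRleft : ∀ (k : ℕ), 0 < k → ∀ x : L.domain,
      R k ((k : ℂ) • (x : X) - L x) = (x : X))
    (hRnorm : ∀ k : ℕ, 0 < k → ‖R k‖ ≤ 1 / k)
    (B BL LB : X →L[ℂ] X)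
    (hBL : ∀ x : L.domain, BL x = B (L x))
    (hLBdom : Dense {x : X | B x ∈ L.domain})
    (hLB : ∀ (x : X) (hx : B x ∈ L.domain), LB x = L ⟨B x, hx⟩) :
    ∃ C : ℝ, ∀ k : ℕ, 0 < k →
      ‖B * ((k : ℂ) ^ 2 • R k - (k : ℂ) • 1) * B - B * LB‖ ≤ C / k := by
  refine ⟨‖BL‖ * ‖LB‖, fun k hk => ?_⟩
  have hk' : (0:ℝ) < k := by exact_mod_cast hk
  set T := B * ((k : ℂ) ^ 2 • R k - (k : ℂ) • 1) * B - B * LB with hT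
  have hC : (0:ℝ) ≤ ‖BL‖ * ‖LB‖ / k := by positivity
  refine ContinuousLinearMap.opNorm_le_bound _ hC (fun x => ?_)
  -- first prove the bound on the dense set
  have key : ∀ y : X, B y ∈ L.domain → ‖T y‖ ≤ ‖BL‖ * ‖LB‖ / k * ‖y‖ := by
    intro y hy
    set w := LB y with hw
    have hw' : L ⟨B y, hy⟩ = w := (hLB y hy).symm
    have h1 : (k:ℂ) • R k (B y) - R k (L ⟨B y, hy⟩) = B y := by
      rw [← map_smul, ← map_sub]; exact hRleft k hk ⟨B y, hy⟩
    rw [hw'] at h1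
    have h2 : (k:ℂ)^2 • R k (B y) - (k:ℂ) • (B y) = (k:ℂ) • R k w := by
      have := congrArg (fun z => (k:ℂ) • z) h1
      simp only [smul_sub, smul_smul, ← pow_two] at this
      rw [← this]; abel
    have h3 : (k:ℂ) • R k w - w = L ⟨R k w, hRmem k hk w⟩ := by
      have h := hRright k hk w
      rw [sub_eq_iff_eq_add] at h
      rw [h]; abel
    have hTy : T y = BL (R k w) := by
      rw [hBL ⟨R k w, hRmem k hk w⟩, ← h3]
      simp only [hT, ContinuousLinearMap.sub_apply, ContinuousLinearMap.mul_apply,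
        ContinuousLinearMap.smul_apply, ContinuousLinearMap.one_apply, h2, ← hw]
      rw [map_sub, map_smul]
    rw [hTy]
    calc ‖BL (R k w)‖ ≤ ‖BL‖ * ‖R k w‖ := BL.le_opNorm _
      _ ≤ ‖BL‖ * (‖R k‖ * ‖w‖) := by
          gcongr; exact (R k).le_opNorm _
      _ ≤ ‖BL‖ * ((1/k) * (‖LB‖ * ‖y‖)) := by
          gcongr
          · exact hRnorm k hk
          · exact LB.le_opNorm _
      _ = ‖BL‖ * ‖LB‖ / k * ‖y‖ := by ring
  -- extend by density
  have hclosed : IsClosed {y : X | ‖T y‖ ≤ ‖BL‖ * ‖LB‖ / k * ‖y‖} :=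
    isClosed_le T.continuous.norm (continuous_const.mul continuous_norm)
  have hsub : {y : X | B y ∈ L.domain} ⊆ {y : X | ‖T y‖ ≤ ‖BL‖ * ‖LB‖ / k * ‖y‖} :=
    fun y hy => key y hy
  have : x ∈ {y : X | ‖T y‖ ≤ ‖BL‖ * ‖LB‖ / k * ‖y‖} := by
    have := hclosed.closure_subset_iff.mpr hsub
    exact this (by rw [hLBdom.closure_eq]; trivial)
  exact this
end

section
/- Let X be a Banach space, ℒ ∈ B(X) the (bounded) generator of a contraction semigroup, and M ∈ B(X) a contraction such that Mⁿx → Px for all x ∈ X (strong power-convergence) for some P ∈ B(X). Then for every t ≥ 0 and x ∈ X, (M e^{tℒ/n})ⁿ x → e^{tPℒP} P x as n → ∞. -/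
open Filter

set_option linter.unusedSectionVars false
set_option synthInstance.maxHeartbeats 1000000
set_option maxHeartbeats 4000000

section ZenoAux
open NormedSpace Nat

lemma zeno_one_add_pow_le (u : ℝ) (n : ℕ) (h : 0 ≤ u) : (1 + u) ^ n ≤ Real.exp (n * u) := by
  calc (1 + u) ^ n ≤ (Real.exp u) ^ n := by
        apply pow_le_pow_left₀ (by positivity)
        linarith [Real.add_one_le_exp u]
    _ = Real.exp (n * u) := (Real.exp_nat_mul u n).symm





section expbounds
variable {A : Type*} [NormedRing A] [NormedAlgebra ℂ A] [CompleteSpace A]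

lemma aux_hs (r : ℝ) : HasSum (fun n : ℕ => r ^ n / n !) (Real.exp r) := by
  rw [Real.exp_eq_exp_ℝ]
  exact expSeries_div_hasSum_exp r

lemma aux_npow (a : A) (h1 : ‖(1:A)‖ ≤ 1) (n : ℕ) : ‖a ^ n‖ ≤ ‖a‖ ^ n := by
  cases n with
  | zero => simpa using h1
  | succ m => exact norm_pow_le' a (Nat.succ_pos m)

lemma aux_term_norm (a : A) (h1 : ‖(1:A)‖ ≤ 1) (n : ℕ) :
    ‖((n ! : ℂ))⁻¹ • a ^ n‖ ≤ ‖a‖ ^ n / n ! := by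
  rw [norm_smul]
  have h2 : ‖((n ! : ℂ))⁻¹‖ = ((n ! : ℝ))⁻¹ := by
    rw [norm_inv]; norm_cast
  rw [h2, inv_mul_eq_div]
  have hf : (0:ℝ) < n ! := by exact_mod_cast n.factorial_pos
  exact (div_le_div_iff_of_pos_right hf).mpr (aux_npow a h1 n)

lemma aux_summable_norm (a : A) (h1 : ‖(1:A)‖ ≤ 1) :
    Summable (fun n : ℕ => ‖((n ! : ℂ))⁻¹ • a ^ n‖) :=
  Summable.of_nonneg_of_le (fun _ => norm_nonneg _) (aux_term_norm a h1)
    (aux_hs ‖a‖).summable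

lemma my_norm_exp_le (a : A) (h1 : ‖(1:A)‖ ≤ 1) : ‖exp a‖ ≤ Real.exp ‖a‖ := by
  rw [exp_eq_tsum ℂ]
  calc ‖∑' n : ℕ, ((n ! : ℂ))⁻¹ • a ^ n‖ ≤ ∑' n : ℕ, ‖((n ! : ℂ))⁻¹ • a ^ n‖ :=
        norm_tsum_le_tsum_norm (aux_summable_norm a h1)
    _ ≤ ∑' n : ℕ, ‖a‖ ^ n / n ! :=
        Summable.tsum_le_tsum (aux_term_norm a h1) (aux_summable_norm a h1) (aux_hs ‖a‖).summable
    _ = Real.exp ‖a‖ := (aux_hs ‖a‖).tsum_eq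

lemma my_exp_sub_one_sub (a : A) (h1 : ‖(1:A)‖ ≤ 1) :
    ‖exp a - 1 - a‖ ≤ ‖a‖ ^ 2 * Real.exp ‖a‖ := by
  have h := exp_series_hasSum_exp' (𝕂 := ℂ) a
  have h2 : HasSum (fun n : ℕ => (((n + 2)! : ℂ))⁻¹ • a ^ (n + 2))
      (exp a - ∑ i ∈ Finset.range 2, ((i ! : ℂ))⁻¹ • a ^ i) :=
    (hasSum_nat_add_iff' 2).mpr h
  have h3 : (∑ i ∈ Finset.range 2, ((i ! : ℂ))⁻¹ • a ^ i) = 1 + a := by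
    simp [Finset.sum_range_succ]
  rw [h3] at h2
  have heq : exp a - 1 - a = ∑' n : ℕ, (((n + 2)! : ℂ))⁻¹ • a ^ (n + 2) := by
    rw [h2.tsum_eq]; abel
  rw [heq]
  have hterm : ∀ n : ℕ, ‖(((n + 2)! : ℂ))⁻¹ • a ^ (n + 2)‖ ≤ ‖a‖ ^ 2 * (‖a‖ ^ n / n !) := by
    intro n
    calc ‖(((n + 2)! : ℂ))⁻¹ • a ^ (n + 2)‖ ≤ ‖a‖ ^ (n + 2) / (n + 2)! :=
          aux_term_norm a h1 (n + 2)
      _ ≤ ‖a‖ ^ (n + 2) / n ! := by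
          apply div_le_div_of_nonneg_left (by positivity)
            (by exact_mod_cast n.factorial_pos)
          exact_mod_cast Nat.factorial_le (by omega)
      _ = ‖a‖ ^ 2 * (‖a‖ ^ n / n !) := by rw [pow_add]; ring
  have hsm : Summable (fun n : ℕ => ‖(((n + 2)! : ℂ))⁻¹ • a ^ (n + 2)‖) :=
    Summable.of_nonneg_of_le (fun _ => norm_nonneg _) hterm
      (((aux_hs ‖a‖).summable).mul_left (‖a‖ ^ 2))
  calc ‖∑' n : ℕ, (((n + 2)! : ℂ))⁻¹ • a ^ (n + 2)‖
      ≤ ∑' n : ℕ, ‖(((n + 2)! : ℂ))⁻¹ • a ^ (n + 2)‖ := norm_tsum_le_tsum_norm hsm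
    _ ≤ ∑' n : ℕ, ‖a‖ ^ 2 * (‖a‖ ^ n / n !) :=
        Summable.tsum_le_tsum hterm hsm (((aux_hs ‖a‖).summable).mul_left (‖a‖ ^ 2))
    _ = ‖a‖ ^ 2 * Real.exp ‖a‖ := by
        rw [tsum_mul_left, (aux_hs ‖a‖).tsum_eq]

lemma my_exp_sub_one (a : A) (h1 : ‖(1:A)‖ ≤ 1) :
    ‖exp a - 1‖ ≤ ‖a‖ * Real.exp ‖a‖ := by
  have h := exp_series_hasSum_exp' (𝕂 := ℂ) a
  have h2 : HasSum (fun n : ℕ => (((n + 1)! : ℂ))⁻¹ • a ^ (n + 1))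
      (exp a - ∑ i ∈ Finset.range 1, ((i ! : ℂ))⁻¹ • a ^ i) :=
    (hasSum_nat_add_iff' 1).mpr h
  have h3 : (∑ i ∈ Finset.range 1, ((i ! : ℂ))⁻¹ • a ^ i) = 1 := by
    simp
  rw [h3] at h2
  have heq : exp a - 1 = ∑' n : ℕ, (((n + 1)! : ℂ))⁻¹ • a ^ (n + 1) := by
    rw [h2.tsum_eq]
  rw [heq]
  have hterm : ∀ n : ℕ, ‖(((n + 1)! : ℂ))⁻¹ • a ^ (n + 1)‖ ≤ ‖a‖ * (‖a‖ ^ n / n !) := by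
    intro n
    calc ‖(((n + 1)! : ℂ))⁻¹ • a ^ (n + 1)‖ ≤ ‖a‖ ^ (n + 1) / (n + 1)! :=
          aux_term_norm a h1 (n + 1)
      _ ≤ ‖a‖ ^ (n + 1) / n ! := by
          apply div_le_div_of_nonneg_left (by positivity)
            (by exact_mod_cast n.factorial_pos)
          exact_mod_cast Nat.factorial_le (by omega)
      _ = ‖a‖ * (‖a‖ ^ n / n !) := by rw [pow_succ]; ring
  have hsm : Summable (fun n : ℕ => ‖(((n + 1)! : ℂ))⁻¹ • a ^ (n + 1)‖) :=
    Summable.of_nonneg_of_le (fun _ => norm_nonneg _) hterm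
      (((aux_hs ‖a‖).summable).mul_left ‖a‖)
  calc ‖∑' n : ℕ, (((n + 1)! : ℂ))⁻¹ • a ^ (n + 1)‖
      ≤ ∑' n : ℕ, ‖(((n + 1)! : ℂ))⁻¹ • a ^ (n + 1)‖ := norm_tsum_le_tsum_norm hsm
    _ ≤ ∑' n : ℕ, ‖a‖ * (‖a‖ ^ n / n !) :=
        Summable.tsum_le_tsum hterm hsm (((aux_hs ‖a‖).summable).mul_left ‖a‖)
    _ = ‖a‖ * Real.exp ‖a‖ := by
        rw [tsum_mul_left, (aux_hs ‖a‖).tsum_eq]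

end expbounds

lemma zeno_pow_sub_pow {R : Type*} [Ring R] (a b : R) (n : ℕ) :
    a ^ n - b ^ n = ∑ j ∈ Finset.range n, a ^ (n - 1 - j) * (a - b) * b ^ j := by
  induction n with
  | zero => simp
  | succ n ih =>
    have h1 : a ^ (n + 1) - b ^ (n + 1) = a * (a ^ n - b ^ n) + (a - b) * b ^ n := by
      rw [_root_.pow_succ', _root_.pow_succ']; noncomm_ring
    rw [h1, ih, Finset.mul_sum, Finset.sum_range_succ]
    congr 1
    · apply Finset.sum_congr rfl
      intro j hj
      have hj' : j < n := Finset.mem_range.mp hj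
      rw [← mul_assoc, ← mul_assoc, ← _root_.pow_succ']
      congr 3
      omega
    · simp

lemma zeno_norm_pow_le_general {X : Type*} [NormedAddCommGroup X] [NormedSpace ℂ X]
    (a : X →L[ℂ] X) (β : ℝ) (hβ : 1 ≤ β) (ha : ‖a‖ ≤ β) (n : ℕ) : ‖a ^ n‖ ≤ β ^ n := by
  induction n with
  | zero => rw [pow_zero, pow_zero]; exact ContinuousLinearMap.norm_id_le
  | succ n ih =>
    rw [pow_succ, pow_succ]
    calc ‖a ^ n * a‖ ≤ ‖a ^ n‖ * ‖a‖ := norm_mul_le _ _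
      _ ≤ β ^ n * β := by gcongr

lemma zeno_norm_pow_le {X : Type*} [NormedAddCommGroup X] [NormedSpace ℂ X]
    (a : X →L[ℂ] X) (ha : ‖a‖ ≤ 1) (n : ℕ) : ‖a ^ n‖ ≤ 1 := by
  simpa using zeno_norm_pow_le_general a 1 le_rfl ha n

lemma zeno_norm_pow_sub_pow_le {X : Type*} [NormedAddCommGroup X] [NormedSpace ℂ X]
    (a b : X →L[ℂ] X) (β : ℝ) (hβ : 1 ≤ β) (ha : ‖a‖ ≤ β) (hb : ‖b‖ ≤ β) (n : ℕ) :
    ‖a ^ n - b ^ n‖ ≤ n * ‖a - b‖ * β ^ n := by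
  have hβ0 : (0:ℝ) ≤ β := le_trans zero_le_one hβ
  rw [zeno_pow_sub_pow]
  calc ‖∑ j ∈ Finset.range n, a ^ (n - 1 - j) * (a - b) * b ^ j‖
      ≤ ∑ j ∈ Finset.range n, ‖a ^ (n - 1 - j) * (a - b) * b ^ j‖ := norm_sum_le _ _
    _ ≤ ∑ j ∈ Finset.range n, ‖a - b‖ * β ^ n := by
        apply Finset.sum_le_sum
        intro j hj
        have hj' : j < n := Finset.mem_range.mp hj
        calc ‖a ^ (n - 1 - j) * (a - b) * b ^ j‖
            ≤ ‖a ^ (n - 1 - j) * (a - b)‖ * ‖b ^ j‖ := norm_mul_le _ _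
          _ ≤ ‖a ^ (n - 1 - j)‖ * ‖a - b‖ * ‖b ^ j‖ := by
              gcongr; exact norm_mul_le _ _
          _ ≤ β ^ (n - 1 - j) * ‖a - b‖ * β ^ j := by
              gcongr
              · exact zeno_norm_pow_le_general a β hβ ha _
              · exact zeno_norm_pow_le_general b β hβ hb _
          _ = ‖a - b‖ * β ^ (n - 1 - j + j) := by rw [pow_add]; ring
          _ ≤ ‖a - b‖ * β ^ n := by
              gcongr
              · omega
    _ = n * ‖a - b‖ * β ^ n := by
        rw [Finset.sum_const, Finset.card_range, nsmul_eq_mul]; ring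

lemma zeno_unif_small {X : Type*} [NormedAddCommGroup X] [NormedSpace ℂ X]
    (M P : X →L[ℂ] X) (hM1 : ∀ k : ℕ, ‖M ^ k‖ ≤ 1)
    (hconv : ∀ u : X, Tendsto (fun n : ℕ => (M ^ n) u) atTop (nhds (P u)))
    (K : Set X) (hK : IsCompact K) (hK0 : ∀ u ∈ K, P u = 0)
    {ε : ℝ} (hε : 0 < ε) : ∃ m : ℕ, ∀ u ∈ K, ‖(M ^ m) u‖ < ε := by
  have hopen : ∀ i : ℕ, IsOpen {u : X | ‖(M ^ i) u‖ < ε} := fun i =>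
    isOpen_lt ((M ^ i).continuous.norm) continuous_const
  have hcov : K ⊆ ⋃ i : ℕ, {u : X | ‖(M ^ i) u‖ < ε} := by
    intro u hu
    have h0 : Tendsto (fun n : ℕ => ‖(M ^ n) u‖) atTop (nhds 0) := by
      have := (hconv u).norm
      rwa [hK0 u hu, norm_zero] at this
    obtain ⟨i, hi⟩ := (h0.eventually (eventually_lt_nhds hε)).exists
    exact Set.mem_iUnion.mpr ⟨i, by simpa using hi⟩
  obtain ⟨s, hs⟩ := hK.elim_finite_subcover _ hopen hcov
  refine ⟨s.sup id, fun u hu => ?_⟩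
  obtain ⟨i, hi_mem, hi⟩ : ∃ i ∈ s, ‖(M ^ i) u‖ < ε := by
    have := hs hu
    simpa using this
  have hle : i ≤ s.sup id := Finset.le_sup (f := id) hi_mem
  have hpow : (M ^ (s.sup id)) u = (M ^ (s.sup id - i)) ((M ^ i) u) := by
    rw [← ContinuousLinearMap.mul_apply, ← pow_add]
    congr 2
    omega
  calc ‖(M ^ (s.sup id)) u‖ = ‖(M ^ (s.sup id - i)) ((M ^ i) u)‖ := by rw [hpow]
    _ ≤ ‖M ^ (s.sup id - i)‖ * ‖(M ^ i) u‖ := (M ^ _).le_opNorm _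
    _ ≤ 1 * ‖(M ^ i) u‖ := by gcongr; exact hM1 _
    _ < ε := by rwa [one_mul]
end ZenoAux

/-- Strong quantum Zeno limit without spectral gap. If `L` is a bounded
generator of a contraction semigroup, and `M` is a contraction with `Mⁿ x → P x` for
all `x` (strong power-convergence), then for every `t ≥ 0` and `x`,
`(M e^{tL/n})ⁿ x → e^{t P L P} P x` as `n → ∞`. -/
theorem stmt9 {X : Type*} [NormedAddCommGroup X] [NormedSpace ℂ X] [CompleteSpace X]
    (L : X →L[ℂ] X)
    (hL : ∀ s : ℝ, 0 ≤ s → ‖NormedSpace.exp (s • L)‖ ≤ 1)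
    (M P : X →L[ℂ] X) (hM : ‖M‖ ≤ 1)
    (hconv : ∀ x : X, Tendsto (fun n : ℕ => (M ^ n) x) atTop (nhds (P x)))
    (t : ℝ) (ht : 0 ≤ t) (x : X) :
    Tendsto (fun n : ℕ => ((M * NormedSpace.exp ((t / n) • L)) ^ n) x) atTop
      (nhds ((NormedSpace.exp (t • (P * L * P)) * P) x)) := by
  classical
  have h1le : ‖(1 : X →L[ℂ] X)‖ ≤ 1 := by
    rw [ContinuousLinearMap.one_def]; exact ContinuousLinearMap.norm_id_le
  set G : X →L[ℂ] X := P * L * P with hGdef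
  set E : ℕ → X →L[ℂ] X := fun n => NormedSpace.exp ((t / (n : ℝ)) • L) with hEdef
  set An : ℕ → X →L[ℂ] X := fun n => M * E n with hAndef
  set Fn : ℕ → X →L[ℂ] X := fun n => NormedSpace.exp ((t / (n : ℝ)) • G) with hFndef
  set S : ℕ → X →L[ℂ] X := fun n => P * E n * P with hSdef
  set z : X := P x with hzdef
  set y : X := x - P x with hydef
  -- basic algebraic facts about P
  have hM1n : ∀ k : ℕ, ‖M ^ k‖ ≤ 1 := zeno_norm_pow_le M hM
  have hshift : ∀ u : X, Tendsto (fun n : ℕ => (M ^ (n + 1)) u) atTop (nhds (P u)) := by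
    intro u
    exact (hconv u).comp (tendsto_add_atTop_nat 1)
  have hMP : M * P = P := by
    ext u
    rw [ContinuousLinearMap.mul_apply]
    have h1 : Tendsto (fun n : ℕ => M ((M ^ n) u)) atTop (nhds (M (P u))) :=
      (M.continuous.tendsto _).comp (hconv u)
    have h2 : (fun n : ℕ => M ((M ^ n) u)) = fun n : ℕ => (M ^ (n + 1)) u := by
      funext n; rw [_root_.pow_succ', ContinuousLinearMap.mul_apply]
    rw [h2] at h1
    exact tendsto_nhds_unique h1 (hshift u)
  have hPM : P * M = P := by
    ext u
    rw [ContinuousLinearMap.mul_apply]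
    have h2 : (fun n : ℕ => (M ^ n) (M u)) = fun n : ℕ => (M ^ (n + 1)) u := by
      funext n; rw [pow_succ, ContinuousLinearMap.mul_apply]
    exact tendsto_nhds_unique (h2 ▸ hconv (M u)) (hshift u)
  have hPMn : ∀ n : ℕ, P * M ^ n = P := by
    intro n
    induction n with
    | zero => simp
    | succ n ih => rw [pow_succ, ← mul_assoc, ih, hPM]
  have hPP : P * P = P := by
    ext u
    rw [ContinuousLinearMap.mul_apply]
    have h1 : Tendsto (fun n : ℕ => P ((M ^ n) u)) atTop (nhds (P (P u))) :=
      (P.continuous.tendsto _).comp (hconv u)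
    have h2 : (fun n : ℕ => P ((M ^ n) u)) = fun _ : ℕ => P u := by
      funext n; rw [← ContinuousLinearMap.mul_apply, hPMn n]
    rw [h2] at h1
    exact tendsto_nhds_unique h1 tendsto_const_nhds
  have hPle : ‖P‖ ≤ 1 := by
    apply ContinuousLinearMap.opNorm_le_bound _ zero_le_one
    intro u
    rw [one_mul]
    refine le_of_tendsto (hconv u).norm ?_
    filter_upwards with n
    calc ‖(M ^ n) u‖ ≤ ‖M ^ n‖ * ‖u‖ := (M ^ n).le_opNorm u
      _ ≤ 1 * ‖u‖ := by gcongr; exact hM1n n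
      _ = ‖u‖ := one_mul _
  have hPz : P z = z := by
    rw [hzdef, ← ContinuousLinearMap.mul_apply, hPP]
  have hMz : M z = z := by
    rw [hzdef, ← ContinuousLinearMap.mul_apply, hMP]
  have hPy : P y = 0 := by
    rw [hydef, map_sub, ← ContinuousLinearMap.mul_apply, hPP, sub_self]
  have hGP : G * P = G := by
    rw [hGdef, mul_assoc, hPP]
  have hPG : P * G = G := by
    rw [hGdef, ← mul_assoc, ← mul_assoc, hPP]
  have hcommPG : Commute P G := hPG.trans hGP.symm
  -- numeric bounds
  have hτpos : ∀ n : ℕ, (0:ℝ) ≤ t / (n : ℝ) := fun n => by positivity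
  have hE1n : ∀ n : ℕ, ‖E n‖ ≤ 1 := fun n => hL _ (hτpos n)
  have hAn1 : ∀ n : ℕ, ‖An n‖ ≤ 1 := by
    intro n
    calc ‖An n‖ ≤ ‖M‖ * ‖E n‖ := norm_mul_le _ _
      _ ≤ 1 := by nlinarith [norm_nonneg M, norm_nonneg (E n), hE1n n]
  have hAnpow : ∀ n k : ℕ, ‖(An n) ^ k‖ ≤ 1 := fun n => zeno_norm_pow_le (An n) (hAn1 n)
  have hS1 : ∀ n : ℕ, ‖S n‖ ≤ 1 := by
    intro n
    calc ‖S n‖ ≤ ‖P * E n‖ * ‖P‖ := norm_mul_le _ _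
      _ ≤ ‖P‖ * ‖E n‖ * ‖P‖ := by gcongr; exact norm_mul_le _ _
      _ ≤ 1 := by
          nlinarith [norm_nonneg P, norm_nonneg (E n), hE1n n, hPle,
            mul_nonneg (norm_nonneg P) (norm_nonneg (E n))]
  have hSpow1 : ∀ n k : ℕ, ‖(S n) ^ k‖ ≤ 1 := fun n => zeno_norm_pow_le (S n) (hS1 n)
  set c1 : ℝ := t * ‖L‖ * Real.exp (t * ‖L‖) with hc1
  set c2 : ℝ := (t * ‖L‖) ^ 2 * Real.exp (t * ‖L‖) with hc2
  set c3 : ℝ := (t * ‖G‖) ^ 2 * Real.exp (t * ‖G‖) with hc3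
  set c4 : ℝ := c2 + c3 with hc4
  set c5 : ℝ := c4 * Real.exp c4 with hc5
  have htL0 : 0 ≤ t * ‖L‖ := mul_nonneg ht (norm_nonneg L)
  have htG0 : 0 ≤ t * ‖G‖ := mul_nonneg ht (norm_nonneg G)
  have hc1_0 : 0 ≤ c1 := mul_nonneg htL0 (Real.exp_pos _).le
  have hc2_0 : 0 ≤ c2 := mul_nonneg (sq_nonneg _) (Real.exp_pos _).le
  have hc3_0 : 0 ≤ c3 := mul_nonneg (sq_nonneg _) (Real.exp_pos _).le
  have hc4_0 : 0 ≤ c4 := add_nonneg hc2_0 hc3_0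
  have hc5_0 : 0 ≤ c5 := mul_nonneg hc4_0 (Real.exp_pos _).le
  have hsmulnorm : ∀ (n : ℕ) (T : X →L[ℂ] X), ‖(t / (n : ℝ)) • T‖ = t / (n : ℝ) * ‖T‖ := by
    intro n T
    rw [show ‖(t / (n : ℝ)) • T‖ = ‖(t / (n:ℝ))‖ * ‖T‖ from norm_smul _ T,
      Real.norm_of_nonneg (hτpos n)]
  have hτle : ∀ n : ℕ, 1 ≤ n → t / (n : ℝ) ≤ t := by
    intro n hn
    exact div_le_self ht (by exact_mod_cast hn)
  have hnpos : ∀ n : ℕ, 1 ≤ n → (0:ℝ) < (n : ℝ) := by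
    intro n hn; exact_mod_cast Nat.lt_of_lt_of_le Nat.zero_lt_one hn
  have hEsub1 : ∀ n : ℕ, 1 ≤ n → ‖E n - 1‖ ≤ c1 / (n : ℝ) := by
    intro n hn
    have hb := my_exp_sub_one ((t / (n : ℝ)) • L) h1le
    rw [hsmulnorm] at hb
    refine hb.trans ?_
    have h2 : t / (n : ℝ) * ‖L‖ ≤ t * ‖L‖ :=
      mul_le_mul_of_nonneg_right (hτle n hn) (norm_nonneg L)
    have hn0 : (0:ℝ) < (n:ℝ) := hnpos n hn
    calc t / (n : ℝ) * ‖L‖ * Real.exp (t / (n : ℝ) * ‖L‖)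
        ≤ t / (n : ℝ) * ‖L‖ * Real.exp (t * ‖L‖) := by gcongr
      _ = c1 / (n : ℝ) := by
          field_simp [hc1, hn0.ne']
          linear_combination hc1.symm
  have hEsub2 : ∀ n : ℕ, 1 ≤ n →
      ‖E n - 1 - (t / (n : ℝ)) • L‖ ≤ c2 / (n : ℝ) ^ 2 := by
    intro n hn
    have hb := my_exp_sub_one_sub ((t / (n : ℝ)) • L) h1le
    rw [hsmulnorm] at hb
    refine hb.trans ?_
    have h2 : t / (n : ℝ) * ‖L‖ ≤ t * ‖L‖ :=
      mul_le_mul_of_nonneg_right (hτle n hn) (norm_nonneg L)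
    have hn0 : (0:ℝ) < (n:ℝ) := hnpos n hn
    calc (t / (n : ℝ) * ‖L‖) ^ 2 * Real.exp (t / (n : ℝ) * ‖L‖)
        ≤ (t / (n : ℝ) * ‖L‖) ^ 2 * Real.exp (t * ‖L‖) := by gcongr
      _ = c2 / (n : ℝ) ^ 2 := by
          field_simp [hc2, hn0.ne']
          linear_combination hc2.symm
  have hFsub2 : ∀ n : ℕ, 1 ≤ n →
      ‖Fn n - 1 - (t / (n : ℝ)) • G‖ ≤ c3 / (n : ℝ) ^ 2 := by
    intro n hn
    have hb := my_exp_sub_one_sub ((t / (n : ℝ)) • G) h1le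
    rw [hsmulnorm] at hb
    refine hb.trans ?_
    have h2 : t / (n : ℝ) * ‖G‖ ≤ t * ‖G‖ :=
      mul_le_mul_of_nonneg_right (hτle n hn) (norm_nonneg G)
    have hn0 : (0:ℝ) < (n:ℝ) := hnpos n hn
    calc (t / (n : ℝ) * ‖G‖) ^ 2 * Real.exp (t / (n : ℝ) * ‖G‖)
        ≤ (t / (n : ℝ) * ‖G‖) ^ 2 * Real.exp (t * ‖G‖) := by gcongr
      _ = c3 / (n : ℝ) ^ 2 := by
          field_simp [hc3, hn0.ne']
          linear_combination hc3.symm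
  have hSF : ∀ n : ℕ, 1 ≤ n → ‖S n - Fn n * P‖ ≤ c4 / (n : ℝ) ^ 2 := by
    intro n hn
    have hid : S n - Fn n * P
        = P * (E n - 1 - (t / (n : ℝ)) • L) * P - (Fn n - 1 - (t / (n : ℝ)) • G) * P := by
      simp only [mul_sub, sub_mul, mul_one, one_mul, smul_mul_assoc, mul_smul_comm]
      rw [hPP, hGP, hSdef]
      abel
    rw [hid]
    calc ‖P * (E n - 1 - (t / (n : ℝ)) • L) * P - (Fn n - 1 - (t / (n : ℝ)) • G) * P‖
        ≤ ‖P * (E n - 1 - (t / (n : ℝ)) • L) * P‖ + ‖(Fn n - 1 - (t / (n : ℝ)) • G) * P‖ :=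
          norm_sub_le _ _
      _ ≤ ‖P‖ * ‖E n - 1 - (t / (n : ℝ)) • L‖ * ‖P‖
          + ‖Fn n - 1 - (t / (n : ℝ)) • G‖ * ‖P‖ := by
          gcongr
          · calc ‖P * (E n - 1 - (t / (n : ℝ)) • L) * P‖
                ≤ ‖P * (E n - 1 - (t / (n : ℝ)) • L)‖ * ‖P‖ := norm_mul_le _ _
              _ ≤ ‖P‖ * ‖E n - 1 - (t / (n : ℝ)) • L‖ * ‖P‖ := by
                  gcongr; exact norm_mul_le _ _
          · exact norm_mul_le _ _
      _ ≤ 1 * (c2 / (n : ℝ) ^ 2) * 1 + (c3 / (n : ℝ) ^ 2) * 1 := by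
          gcongr <;>
            first
              | exact hPle
              | exact hEsub2 n hn
              | exact hFsub2 n hn
              | positivity
      _ = c4 / (n : ℝ) ^ 2 := by rw [hc4]; ring
  have hFP1 : ∀ n : ℕ, 1 ≤ n → ‖Fn n * P‖ ≤ 1 + c4 / (n : ℝ) ^ 2 := by
    intro n hn
    calc ‖Fn n * P‖ = ‖S n - (S n - Fn n * P)‖ := by congr 1; abel
      _ ≤ ‖S n‖ + ‖S n - Fn n * P‖ := norm_sub_le _ _
      _ ≤ 1 + c4 / (n : ℝ) ^ 2 := add_le_add (hS1 n) (hSF n hn)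
  have hSpow : ∀ n : ℕ, 1 ≤ n → ∀ j : ℕ, j ≤ n →
      ‖S n ^ j - (Fn n * P) ^ j‖ ≤ c5 / (n : ℝ) := by
    intro n hn j hj
    have hn0 : (0:ℝ) < (n:ℝ) := hnpos n hn
    have hq0 : (0:ℝ) ≤ c4 / (n : ℝ) ^ 2 := by positivity
    have hβ : (1:ℝ) ≤ 1 + c4 / (n : ℝ) ^ 2 := le_add_of_nonneg_right hq0
    have h := zeno_norm_pow_sub_pow_le (S n) (Fn n * P) (1 + c4 / (n : ℝ) ^ 2) hβ
      ((hS1 n).trans hβ) (hFP1 n hn) j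
    refine h.trans ?_
    have hβj : (1 + c4 / (n : ℝ) ^ 2) ^ j ≤ Real.exp c4 := by
      refine (zeno_one_add_pow_le _ j hq0).trans ?_
      rw [Real.exp_le_exp]
      have e1 : (j : ℝ) * (c4 / (n : ℝ) ^ 2) ≤ (n : ℝ) * (c4 / (n : ℝ) ^ 2) :=
        mul_le_mul_of_nonneg_right (by exact_mod_cast hj) hq0
      refine e1.trans ?_
      have e2 : (n : ℝ) * (c4 / (n : ℝ) ^ 2) = c4 / (n : ℝ) := by field_simp
      rw [e2, div_le_iff₀ hn0]
      nlinarith [hc4_0, (by exact_mod_cast hn : (1:ℝ) ≤ (n:ℝ))]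
    have e1 : (j : ℝ) * ‖S n - Fn n * P‖ ≤ (n : ℝ) * (c4 / (n : ℝ) ^ 2) :=
      mul_le_mul (by exact_mod_cast hj) (hSF n hn) (norm_nonneg _) hn0.le
    have e3 : (0:ℝ) ≤ (1 + c4 / (n : ℝ) ^ 2) ^ j := pow_nonneg (by linarith) j
    calc (j : ℝ) * ‖S n - Fn n * P‖ * (1 + c4 / (n : ℝ) ^ 2) ^ j
        ≤ ((n : ℝ) * (c4 / (n : ℝ) ^ 2)) * Real.exp c4 :=
          mul_le_mul e1 hβj e3 (mul_nonneg hn0.le hq0)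
      _ = c5 / (n : ℝ) := by field_simp [hc5]; ring
  have hFPj : ∀ n : ℕ, 1 ≤ n → ∀ j : ℕ, 1 ≤ j →
      (Fn n * P) ^ j = NormedSpace.exp (((j : ℝ) * (t / (n : ℝ))) • G) * P := by
    intro n hn j hj
    induction j with
    | zero => omega
    | succ j ih =>
      rcases Nat.lt_or_ge j 1 with hj1 | hj1
      · interval_cases j
        simp only [zero_add, pow_one, Nat.cast_one, one_mul, hFndef]
      · rw [pow_succ, ih hj1]
        have hcFnP : P * Fn n = Fn n * P :=
          (hcommPG.smul_right (t / (n : ℝ))).exp_right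
        have hcomm2 : Commute (((j : ℝ) * (t / (n : ℝ))) • G) ((t / (n : ℝ)) • G) :=
          ((Commute.refl G).smul_left _).smul_right _
        calc NormedSpace.exp (((j : ℝ) * (t / (n : ℝ))) • G) * P * (Fn n * P)
            = NormedSpace.exp (((j : ℝ) * (t / (n : ℝ))) • G) * (P * Fn n) * P := by
              rw [mul_assoc, mul_assoc, mul_assoc]
          _ = NormedSpace.exp (((j : ℝ) * (t / (n : ℝ))) • G) * Fn n * (P * P) := by
              rw [hcFnP, mul_assoc, mul_assoc, mul_assoc]
          _ = NormedSpace.exp (((j : ℝ) * (t / (n : ℝ))) • G) * Fn n * P := by rw [hPP]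
          _ = NormedSpace.exp ((((j : ℝ) + 1) * (t / (n : ℝ))) • G) * P := by
              rw [hFndef]
              letI : NormedAlgebra ℚ (X →L[ℂ] X) := NormedAlgebra.restrictScalars ℚ ℂ _
              rw [← NormedSpace.exp_add_of_commute hcomm2]
              congr 2
              rw [← add_smul]
              congr 1
              ring
          _ = NormedSpace.exp ((((j + 1 : ℕ) : ℝ) * (t / (n : ℝ))) • G) * P := by
              norm_num
  have hSnexp : ∀ n : ℕ, 1 ≤ n →
      ‖S n ^ n - NormedSpace.exp (t • G) * P‖ ≤ c5 / (n : ℝ) := by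
    intro n hn
    have hn0 : (0:ℝ) < (n:ℝ) := hnpos n hn
    have h1 := hSpow n hn n le_rfl
    rw [hFPj n hn n hn] at h1
    have h2 : ((n : ℝ) * (t / (n : ℝ))) = t := by field_simp
    rwa [h2] at h1
  have hwP : ∀ (n j : ℕ), P ((S n ^ j) z) = (S n ^ j) z := by
    intro n j
    have hstep : ∀ w : X, P (S n w) = S n w := by
      intro w
      simp only [hSdef, ContinuousLinearMap.mul_apply]
      rw [← ContinuousLinearMap.mul_apply P P, hPP]
    induction j with
    | zero => simpa using hPz
    | succ j ih =>
      rw [_root_.pow_succ', ContinuousLinearMap.mul_apply]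
      exact hstep _
  have hwnorm : ∀ (n j : ℕ), ‖(S n ^ j) z‖ ≤ ‖z‖ := by
    intro n j
    calc ‖(S n ^ j) z‖ ≤ ‖S n ^ j‖ * ‖z‖ := (S n ^ j).le_opNorm z
      _ ≤ 1 * ‖z‖ := mul_le_mul_of_nonneg_right (hSpow1 n j) (norm_nonneg z)
      _ = ‖z‖ := one_mul _
  have hAu : ∀ (n k : ℕ) (u : X), ‖((An n) ^ k) u‖ ≤ ‖u‖ := by
    intro n k u
    calc ‖((An n) ^ k) u‖ ≤ ‖(An n) ^ k‖ * ‖u‖ := ((An n) ^ k).le_opNorm u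
      _ ≤ 1 * ‖u‖ := mul_le_mul_of_nonneg_right (hAnpow n k) (norm_nonneg u)
      _ = ‖u‖ := one_mul _
  have hkey : ∀ (n : ℕ) (w : X), P w = w →
      (An n) w - (S n) w = (M - P) ((E n) w - w) := by
    intro n w hw
    have hMw : M w = w := by
      conv_lhs => rw [← hw]
      rw [← ContinuousLinearMap.mul_apply, hMP, hw]
    have h1 : (An n) w = M ((E n) w) := by
      simp only [hAndef, ContinuousLinearMap.mul_apply]
    have h2 : (S n) w = P ((E n) w) := by
      simp only [hSdef, ContinuousLinearMap.mul_apply, hw]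
    rw [h1, h2, ContinuousLinearMap.sub_apply, map_sub, map_sub, hMw, hw]
    abel
  set v : ℝ → X := fun s => (M - P) (L ((NormedSpace.exp (s • G)) z)) with hvdef
  have hvcont : Continuous v := by
    refine (M - P).continuous.comp (L.continuous.comp ?_)
    letI : NormedAlgebra ℚ (X →L[ℂ] X) := NormedAlgebra.restrictScalars ℚ ℂ _
    exact (NormedSpace.exp_continuous.comp (continuous_id.smul continuous_const)).clm_apply
      continuous_const
  set K : Set X := insert y (v '' Set.Icc 0 t) with hKdef
  have hKcpt : IsCompact K := (isCompact_Icc.image hvcont).insert y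
  have hKP : ∀ u ∈ K, P u = 0 := by
    intro u hu
    rcases Set.mem_insert_iff.mp hu with rfl | hmem
    · exact hPy
    · obtain ⟨s, _, rfl⟩ := hmem
      rw [hvdef]
      simp only
      rw [ContinuousLinearMap.sub_apply, map_sub, ← ContinuousLinearMap.mul_apply P M,
        ← ContinuousLinearMap.mul_apply P P, hPM, hPP, sub_self]
  set B : ℝ := 2 * ‖L‖ * Real.exp (t * ‖G‖) * ‖z‖ with hBdef
  have hB0 : 0 ≤ B := by
    rw [hBdef]; positivity
  have hMsubP : ‖M - P‖ ≤ 2 := by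
    calc ‖M - P‖ ≤ ‖M‖ + ‖P‖ := norm_sub_le _ _
      _ ≤ 2 := by linarith
  have hvB : ∀ s : ℝ, s ∈ Set.Icc (0:ℝ) t → ‖v s‖ ≤ B := by
    intro s hs
    obtain ⟨hs0, hst⟩ := hs
    have hexp : ‖NormedSpace.exp (s • G)‖ ≤ Real.exp (t * ‖G‖) := by
      refine (my_norm_exp_le _ h1le).trans ?_
      rw [Real.exp_le_exp]
      calc ‖s • G‖ = s * ‖G‖ := by
            rw [show ‖s • G‖ = ‖s‖ * ‖G‖ from norm_smul s G, Real.norm_of_nonneg hs0]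
        _ ≤ t * ‖G‖ := mul_le_mul_of_nonneg_right hst (norm_nonneg G)
    have h1 : ‖v s‖ ≤ ‖M - P‖ * (‖L‖ * (‖NormedSpace.exp (s • G)‖ * ‖z‖)) := by
      rw [hvdef]
      simp only
      calc ‖(M - P) (L ((NormedSpace.exp (s • G)) z))‖
          ≤ ‖M - P‖ * ‖L ((NormedSpace.exp (s • G)) z)‖ := (M - P).le_opNorm _
        _ ≤ ‖M - P‖ * (‖L‖ * ‖(NormedSpace.exp (s • G)) z‖) := by
            gcongr
            exact L.le_opNorm _
        _ ≤ ‖M - P‖ * (‖L‖ * (‖NormedSpace.exp (s • G)‖ * ‖z‖)) := by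
            gcongr
            exact (NormedSpace.exp (s • G)).le_opNorm _
    refine h1.trans ?_
    calc ‖M - P‖ * (‖L‖ * (‖NormedSpace.exp (s • G)‖ * ‖z‖))
        ≤ 2 * (‖L‖ * (Real.exp (t * ‖G‖) * ‖z‖)) := by
          gcongr
      _ = B := by rw [hBdef]; ring
  have hwv : ∀ n : ℕ, 1 ≤ n → ∀ j : ℕ, j ≤ n →
      ‖(S n ^ j) z - (NormedSpace.exp (((j : ℝ) * (t / (n : ℝ))) • G)) z‖
        ≤ c5 / (n : ℝ) * ‖z‖ := by
    intro n hn j hj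
    have hn0 : (0:ℝ) < (n:ℝ) := hnpos n hn
    rcases Nat.eq_zero_or_pos j with rfl | hj1
    · simp only [pow_zero, ContinuousLinearMap.one_apply, Nat.cast_zero, zero_mul,
        zero_smul, NormedSpace.exp_zero, sub_self, norm_zero]
      exact mul_nonneg (div_nonneg hc5_0 hn0.le) (norm_nonneg z)
    · have h1 : (NormedSpace.exp (((j : ℝ) * (t / (n : ℝ))) • G)) z
          = ((Fn n * P) ^ j) z := by
        rw [hFPj n hn j hj1, ContinuousLinearMap.mul_apply, hPz]
      rw [h1, ← ContinuousLinearMap.sub_apply]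
      calc ‖(S n ^ j - (Fn n * P) ^ j) z‖
          ≤ ‖S n ^ j - (Fn n * P) ^ j‖ * ‖z‖ := (S n ^ j - (Fn n * P) ^ j).le_opNorm z
        _ ≤ c5 / (n : ℝ) * ‖z‖ :=
            mul_le_mul_of_nonneg_right (hSpow n hn j hj) (norm_nonneg z)
  have hAnM : ∀ n : ℕ, 1 ≤ n → ‖An n - M‖ ≤ c1 / (n : ℝ) := by
    intro n hn
    have hidm : An n - M = M * (E n - 1) := by
      simp only [hAndef]
      rw [mul_sub, mul_one]
    rw [hidm]
    calc ‖M * (E n - 1)‖ ≤ ‖M‖ * ‖E n - 1‖ := norm_mul_le _ _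
      _ ≤ 1 * (c1 / (n : ℝ)) :=
          mul_le_mul hM (hEsub1 n hn) (norm_nonneg _) zero_le_one
      _ = c1 / (n : ℝ) := one_mul _
  have hApowM : ∀ n : ℕ, 1 ≤ n → ∀ k : ℕ, ‖(An n) ^ k - M ^ k‖ ≤ (k : ℝ) * (c1 / (n : ℝ)) := by
    intro n hn k
    have h := zeno_norm_pow_sub_pow_le (An n) M 1 le_rfl (hAn1 n) hM k
    rw [one_pow, mul_one] at h
    refine h.trans ?_
    exact mul_le_mul_of_nonneg_left (hAnM n hn) (Nat.cast_nonneg k)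
  set C6 : ℝ := 2 * c2 * ‖z‖ + 2 * t * ‖L‖ * c5 * ‖z‖ with hC6def
  have hcore : ∀ n : ℕ, 1 ≤ n →
      ‖((An n) ^ n) z - ((S n) ^ n) z‖
        ≤ (t / (n : ℝ)) * (∑ j ∈ Finset.range n,
            ‖((An n) ^ (n - 1 - j)) (v ((j : ℝ) * (t / (n : ℝ))))‖) + C6 / (n : ℝ) := by
    intro n hn
    have hn0 : (0:ℝ) < (n:ℝ) := hnpos n hn
    have happ : ((An n) ^ n) z - ((S n) ^ n) z
        = ∑ j ∈ Finset.range n, (((An n) ^ (n - 1 - j) * (An n - S n) * (S n) ^ j) z) := by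
      rw [← ContinuousLinearMap.sub_apply, zeno_pow_sub_pow, ContinuousLinearMap.sum_apply]
    rw [happ]
    have hterm : ∀ j ∈ Finset.range n,
        ‖((An n) ^ (n - 1 - j) * (An n - S n) * (S n) ^ j) z‖
          ≤ (t / (n : ℝ)) * ‖((An n) ^ (n - 1 - j)) (v ((j : ℝ) * (t / (n : ℝ))))‖
            + C6 / (n : ℝ) ^ 2 := by
      intro j hj
      have hjn : j < n := Finset.mem_range.mp hj
      set w : X := (S n ^ j) z with hwdef
      have hw : P w = w := hwP n j
      have e0 : ((An n) ^ (n - 1 - j) * (An n - S n) * (S n) ^ j) z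
          = ((An n) ^ (n - 1 - j)) ((An n) w - (S n) w) := by
        rw [ContinuousLinearMap.mul_apply, ContinuousLinearMap.mul_apply,
          ContinuousLinearMap.sub_apply]
      have e1 : (E n) w - w = (t / (n : ℝ)) • (L w) + ((E n - 1 - (t / (n : ℝ)) • L) w) := by
        simp only [ContinuousLinearMap.sub_apply, ContinuousLinearMap.smul_apply,
          ContinuousLinearMap.one_apply]
        abel
      have e2 : (M - P) ((E n) w - w)
          = (t / (n : ℝ)) • (v ((j : ℝ) * (t / (n : ℝ))))
            + ((t / (n : ℝ)) • ((M - P) (L (w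
                - (NormedSpace.exp (((j : ℝ) * (t / (n : ℝ))) • G)) z)))
              + (M - P) ((E n - 1 - (t / (n : ℝ)) • L) w)) := by
        rw [e1, map_add, (M - P).map_smul_of_tower, hvdef]
        simp only
        rw [show L w = L ((NormedSpace.exp (((j : ℝ) * (t / (n : ℝ))) • G)) z)
              + L (w - (NormedSpace.exp (((j : ℝ) * (t / (n : ℝ))) • G)) z) by
            rw [map_sub]; abel]
        rw [map_add, smul_add]
        abel
      rw [e0, hkey n w hw, e2, map_add, map_add,
        ((An n) ^ (n - 1 - j)).map_smul_of_tower, ((An n) ^ (n - 1 - j)).map_smul_of_tower]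
      have hr2 : ‖(M - P) (L (w - (NormedSpace.exp (((j : ℝ) * (t / (n : ℝ))) • G)) z))‖
          ≤ 2 * (‖L‖ * (c5 / (n : ℝ) * ‖z‖)) := by
        calc ‖(M - P) (L (w - (NormedSpace.exp (((j : ℝ) * (t / (n : ℝ))) • G)) z))‖
            ≤ ‖M - P‖ * ‖L (w - (NormedSpace.exp (((j : ℝ) * (t / (n : ℝ))) • G)) z)‖ :=
              (M - P).le_opNorm _
          _ ≤ ‖M - P‖ * (‖L‖ * ‖w - (NormedSpace.exp (((j : ℝ) * (t / (n : ℝ))) • G)) z‖) := by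
              gcongr
              exact L.le_opNorm _
          _ ≤ 2 * (‖L‖ * (c5 / (n : ℝ) * ‖z‖)) := by
              gcongr
              exact hwv n hn j hjn.le
      have hr3 : ‖(M - P) ((E n - 1 - (t / (n : ℝ)) • L) w)‖
          ≤ 2 * (c2 / (n : ℝ) ^ 2 * ‖z‖) := by
        calc ‖(M - P) ((E n - 1 - (t / (n : ℝ)) • L) w)‖
            ≤ ‖M - P‖ * ‖(E n - 1 - (t / (n : ℝ)) • L) w‖ := (M - P).le_opNorm _
          _ ≤ ‖M - P‖ * (‖E n - 1 - (t / (n : ℝ)) • L‖ * ‖w‖) := by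
              gcongr
              exact (E n - 1 - (t / (n : ℝ)) • L).le_opNorm _
          _ ≤ 2 * (c2 / (n : ℝ) ^ 2 * ‖z‖) := by
              gcongr
              · exact hEsub2 n hn
              · exact hwnorm n j
      calc ‖(t / (n : ℝ)) • (((An n) ^ (n - 1 - j)) (v ((j : ℝ) * (t / (n : ℝ)))))
            + ((t / (n : ℝ)) • (((An n) ^ (n - 1 - j)) ((M - P) (L (w
                - (NormedSpace.exp (((j : ℝ) * (t / (n : ℝ))) • G)) z))))
              + ((An n) ^ (n - 1 - j)) ((M - P) ((E n - 1 - (t / (n : ℝ)) • L) w)))‖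
          ≤ ‖(t / (n : ℝ)) • (((An n) ^ (n - 1 - j)) (v ((j : ℝ) * (t / (n : ℝ)))))‖
            + (‖(t / (n : ℝ)) • (((An n) ^ (n - 1 - j)) ((M - P) (L (w
                - (NormedSpace.exp (((j : ℝ) * (t / (n : ℝ))) • G)) z))))‖
              + ‖((An n) ^ (n - 1 - j)) ((M - P) ((E n - 1 - (t / (n : ℝ)) • L) w))‖) :=
            (norm_add_le _ _).trans (by gcongr; exact norm_add_le _ _)
        _ ≤ (t / (n : ℝ)) * ‖((An n) ^ (n - 1 - j)) (v ((j : ℝ) * (t / (n : ℝ))))‖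
            + ((t / (n : ℝ)) * (2 * (‖L‖ * (c5 / (n : ℝ) * ‖z‖)))
              + 2 * (c2 / (n : ℝ) ^ 2 * ‖z‖)) := by
            rw [show ∀ u : X, ‖(t / (n : ℝ)) • u‖ = (t / (n : ℝ)) * ‖u‖ from fun u => by
              rw [show ‖(t / (n : ℝ)) • u‖ = ‖(t / (n:ℝ))‖ * ‖u‖ from norm_smul (t / (n:ℝ)) u,
                Real.norm_of_nonneg (hτpos n)],
              show ∀ u : X, ‖(t / (n : ℝ)) • u‖ = (t / (n : ℝ)) * ‖u‖ from fun u => by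
              rw [show ‖(t / (n : ℝ)) • u‖ = ‖(t / (n:ℝ))‖ * ‖u‖ from norm_smul (t / (n:ℝ)) u,
                Real.norm_of_nonneg (hτpos n)]]
            gcongr
            · exact (hAu n _ _).trans hr2
            · exact (hAu n _ _).trans hr3
        _ = (t / (n : ℝ)) * ‖((An n) ^ (n - 1 - j)) (v ((j : ℝ) * (t / (n : ℝ))))‖
            + C6 / (n : ℝ) ^ 2 := by
            rw [hC6def]
            field_simp
            ring
    refine ((norm_sum_le _ _).trans (Finset.sum_le_sum hterm)).trans ?_
    rw [Finset.sum_add_distrib, ← Finset.mul_sum, Finset.sum_const, Finset.card_range,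
      nsmul_eq_mul]
    have hfin : (n : ℝ) * (C6 / (n : ℝ) ^ 2) = C6 / (n : ℝ) := by
      field_simp
    rw [hfin]
  -- final assembly
  rw [Metric.tendsto_nhds]
  intro ε hε
  have ht2 : (0:ℝ) < t + 2 := by linarith
  set ε0 : ℝ := ε / (2 * (t + 2)) with hε0def
  have hε0 : 0 < ε0 := by rw [hε0def]; positivity
  obtain ⟨m, hm⟩ := zeno_unif_small M P hM1n hconv K hKcpt hKP hε0
  set D : ℝ := t * ((m : ℝ) * c1 * B) + t * ((m : ℝ) * B) + C6 + c5 * ‖z‖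
      + (m : ℝ) * c1 * ‖y‖ with hDdef
  have hDtend : Tendsto (fun n : ℕ => D / (n : ℝ)) atTop (nhds 0) :=
    tendsto_const_div_atTop_nhds_zero_nat D
  have hev1 : ∀ᶠ n : ℕ in atTop, D / (n : ℝ) < ε0 :=
    hDtend.eventually (eventually_lt_nhds hε0)
  filter_upwards [hev1, eventually_ge_atTop (m + 1)] with n hDn hn
  have hn1 : 1 ≤ n := le_trans (Nat.le_add_left 1 m) hn
  have hn0 : (0:ℝ) < (n : ℝ) := hnpos n hn1
  have hmn : m ≤ n := by omega
  rw [dist_eq_norm]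
  have hchg : (M * NormedSpace.exp ((t / (n : ℝ)) • L)) = An n := rfl
  rw [hchg]
  have hdecomp : ∀ u : X, ((An n) ^ m) u = (((An n) ^ m - M ^ m) u) + (M ^ m) u := by
    intro u
    rw [ContinuousLinearMap.sub_apply]
    abel
  have hAmMy : ∀ u : X, ‖u‖ ≤ B → u ∈ K → ‖((An n) ^ m) u‖ ≤ (m : ℝ) * (c1 / (n : ℝ)) * B + ε0 := by
    intro u hub huK
    rw [hdecomp u]
    calc ‖(((An n) ^ m - M ^ m) u) + (M ^ m) u‖
        ≤ ‖((An n) ^ m - M ^ m) u‖ + ‖(M ^ m) u‖ := norm_add_le _ _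
      _ ≤ (m : ℝ) * (c1 / (n : ℝ)) * B + ε0 := by
          refine add_le_add ?_ (hm u huK).le
          calc ‖((An n) ^ m - M ^ m) u‖ ≤ ‖(An n) ^ m - M ^ m‖ * ‖u‖ :=
                ((An n) ^ m - M ^ m).le_opNorm u
            _ ≤ ((m : ℝ) * (c1 / (n : ℝ))) * B :=
                mul_le_mul (hApowM n hn1 m) hub (norm_nonneg u)
                  (mul_nonneg (Nat.cast_nonneg m) (div_nonneg hc1_0 hn0.le))
  -- y part
  have hy : ‖((An n) ^ n) y‖ ≤ (m : ℝ) * (c1 / (n : ℝ)) * ‖y‖ + ε0 := by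
    have hsplit : ((An n) ^ n) y = ((An n) ^ (n - m)) (((An n) ^ m) y) := by
      rw [← ContinuousLinearMap.mul_apply, ← pow_add]
      congr 2
      omega
    rw [hsplit]
    refine (hAu n _ _).trans ?_
    rw [hdecomp y]
    calc ‖(((An n) ^ m - M ^ m) y) + (M ^ m) y‖
        ≤ ‖((An n) ^ m - M ^ m) y‖ + ‖(M ^ m) y‖ := norm_add_le _ _
      _ ≤ (m : ℝ) * (c1 / (n : ℝ)) * ‖y‖ + ε0 := by
          refine add_le_add ?_ (hm y (Set.mem_insert _ _)).le
          calc ‖((An n) ^ m - M ^ m) y‖ ≤ ‖(An n) ^ m - M ^ m‖ * ‖y‖ :=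
                ((An n) ^ m - M ^ m).le_opNorm y
            _ ≤ ((m : ℝ) * (c1 / (n : ℝ))) * ‖y‖ :=
                mul_le_mul_of_nonneg_right (hApowM n hn1 m) (norm_nonneg y)
  -- z part
  set winf : X := (NormedSpace.exp (t • G)) z with hwinf
  have htarget : (NormedSpace.exp (t • G) * P) x = winf := by
    rw [ContinuousLinearMap.mul_apply, hwinf, hzdef]
  have hz2 : ‖((S n) ^ n) z - winf‖ ≤ c5 / (n : ℝ) * ‖z‖ := by
    have h1 : winf = (NormedSpace.exp (t • G) * P) z := by
      rw [ContinuousLinearMap.mul_apply, hPz]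
    rw [h1, ← ContinuousLinearMap.sub_apply]
    calc ‖((S n) ^ n - NormedSpace.exp (t • G) * P) z‖
        ≤ ‖(S n) ^ n - NormedSpace.exp (t • G) * P‖ * ‖z‖ :=
          ((S n) ^ n - NormedSpace.exp (t • G) * P).le_opNorm z
      _ ≤ c5 / (n : ℝ) * ‖z‖ :=
          mul_le_mul_of_nonneg_right (hSnexp n hn1) (norm_nonneg z)
  have hsjmem : ∀ j : ℕ, j < n → (j : ℝ) * (t / (n : ℝ)) ∈ Set.Icc (0:ℝ) t := by
    intro j hj
    constructor
    · exact mul_nonneg (Nat.cast_nonneg j) (hτpos n)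
    · calc (j : ℝ) * (t / (n : ℝ)) ≤ (n : ℝ) * (t / (n : ℝ)) :=
          mul_le_mul_of_nonneg_right (by exact_mod_cast hj.le) (hτpos n)
        _ = t := by field_simp
  set Sig : ℝ := ∑ j ∈ Finset.range n, ‖((An n) ^ (n - 1 - j)) (v ((j : ℝ) * (t / (n : ℝ))))‖
    with hSigdef
  have hsum : Sig ≤ (n : ℝ) * ((m : ℝ) * (c1 / (n : ℝ)) * B + ε0) + (m : ℝ) * B := by
    rw [hSigdef]
    have hsplitsum : ∑ j ∈ Finset.range n, ‖((An n) ^ (n - 1 - j)) (v ((j : ℝ) * (t / (n : ℝ))))‖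
        = ∑ j ∈ Finset.Ico 0 (n - m), ‖((An n) ^ (n - 1 - j)) (v ((j : ℝ) * (t / (n : ℝ))))‖
          + ∑ j ∈ Finset.Ico (n - m) n, ‖((An n) ^ (n - 1 - j)) (v ((j : ℝ) * (t / (n : ℝ))))‖ := by
      rw [Finset.range_eq_Ico,
        ← Finset.sum_Ico_consecutive _ (Nat.zero_le (n - m)) (Nat.sub_le n m)]
    rw [hsplitsum]
    have hb1 : ∑ j ∈ Finset.Ico 0 (n - m), ‖((An n) ^ (n - 1 - j)) (v ((j : ℝ) * (t / (n : ℝ))))‖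
        ≤ (n : ℝ) * ((m : ℝ) * (c1 / (n : ℝ)) * B + ε0) := by
      have hone : ∀ j ∈ Finset.Ico 0 (n - m),
          ‖((An n) ^ (n - 1 - j)) (v ((j : ℝ) * (t / (n : ℝ))))‖
            ≤ (m : ℝ) * (c1 / (n : ℝ)) * B + ε0 := by
        intro j hj
        have hjlt : j < n - m := (Finset.mem_Ico.mp hj).2
        have hjn : j < n := by omega
        have hsj := hsjmem j hjn
        have hvmem : v ((j : ℝ) * (t / (n : ℝ))) ∈ K :=
          Set.mem_insert_of_mem _ ⟨_, hsj, rfl⟩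
        have hvb : ‖v ((j : ℝ) * (t / (n : ℝ)))‖ ≤ B := hvB _ hsj
        have hkm : n - 1 - j = (n - 1 - j - m) + m := by omega
        rw [hkm, pow_add, ContinuousLinearMap.mul_apply]
        exact (hAu n _ _).trans (hAmMy _ hvb hvmem)
      calc ∑ j ∈ Finset.Ico 0 (n - m), ‖((An n) ^ (n - 1 - j)) (v ((j : ℝ) * (t / (n : ℝ))))‖
          ≤ (Finset.Ico 0 (n - m)).card • ((m : ℝ) * (c1 / (n : ℝ)) * B + ε0) :=
            Finset.sum_le_card_nsmul _ _ _ hone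
        _ = ((n - m : ℕ) : ℝ) * ((m : ℝ) * (c1 / (n : ℝ)) * B + ε0) := by
            rw [Nat.card_Ico, Nat.sub_zero, nsmul_eq_mul]
        _ ≤ (n : ℝ) * ((m : ℝ) * (c1 / (n : ℝ)) * B + ε0) := by
            apply mul_le_mul_of_nonneg_right
            · exact_mod_cast Nat.sub_le n m
            · have : (0:ℝ) ≤ (m : ℝ) * (c1 / (n : ℝ)) * B :=
                mul_nonneg (mul_nonneg (Nat.cast_nonneg m) (div_nonneg hc1_0 hn0.le)) hB0
              linarith
    have hb2 : ∑ j ∈ Finset.Ico (n - m) n, ‖((An n) ^ (n - 1 - j)) (v ((j : ℝ) * (t / (n : ℝ))))‖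
        ≤ (m : ℝ) * B := by
      have hone : ∀ j ∈ Finset.Ico (n - m) n,
          ‖((An n) ^ (n - 1 - j)) (v ((j : ℝ) * (t / (n : ℝ))))‖ ≤ B := by
        intro j hj
        have hjn : j < n := (Finset.mem_Ico.mp hj).2
        exact (hAu n _ _).trans (hvB _ (hsjmem j hjn))
      calc ∑ j ∈ Finset.Ico (n - m) n, ‖((An n) ^ (n - 1 - j)) (v ((j : ℝ) * (t / (n : ℝ))))‖
          ≤ (Finset.Ico (n - m) n).card • B := Finset.sum_le_card_nsmul _ _ _ hone
        _ = ((n - (n - m) : ℕ) : ℝ) * B := by rw [Nat.card_Ico, nsmul_eq_mul]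
        _ ≤ (m : ℝ) * B := by
            apply mul_le_mul_of_nonneg_right _ hB0
            exact_mod_cast (by omega : n - (n - m) ≤ m)
    exact add_le_add hb1 hb2
  have hzpart : ‖((An n) ^ n) z - winf‖
      ≤ (t / (n : ℝ)) * Sig + C6 / (n : ℝ) + c5 / (n : ℝ) * ‖z‖ := by
    calc ‖((An n) ^ n) z - winf‖
        ≤ ‖((An n) ^ n) z - ((S n) ^ n) z‖ + ‖((S n) ^ n) z - winf‖ := by
          simpa [dist_eq_norm] using dist_triangle (((An n) ^ n) z) (((S n) ^ n) z) winf
      _ ≤ ((t / (n : ℝ)) * Sig + C6 / (n : ℝ)) + c5 / (n : ℝ) * ‖z‖ :=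
          add_le_add (hcore n hn1) hz2
      _ = (t / (n : ℝ)) * Sig + C6 / (n : ℝ) + c5 / (n : ℝ) * ‖z‖ := by ring
  have hxzy : ((An n) ^ n) x = ((An n) ^ n) z + ((An n) ^ n) y := by
    rw [← map_add]
    congr 1
    rw [hzdef, hydef]
    abel
  have hSig2 : (t / (n : ℝ)) * Sig
      ≤ (t / (n : ℝ)) * ((n : ℝ) * ((m : ℝ) * (c1 / (n : ℝ)) * B + ε0) + (m : ℝ) * B) :=
    mul_le_mul_of_nonneg_left hsum (hτpos n)
  have harith : (t / (n : ℝ)) * ((n : ℝ) * ((m : ℝ) * (c1 / (n : ℝ)) * B + ε0) + (m : ℝ) * B)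
      + C6 / (n : ℝ) + c5 / (n : ℝ) * ‖z‖ + ((m : ℝ) * (c1 / (n : ℝ)) * ‖y‖ + ε0)
      = ε / 2 - ε0 + D / (n : ℝ) := by
    rw [hDdef, hε0def]
    field_simp
    ring
  calc ‖((An n) ^ n) x - (NormedSpace.exp (t • G) * P) x‖
      = ‖(((An n) ^ n) z - winf) + ((An n) ^ n) y‖ := by
        rw [hxzy, htarget]
        congr 1
        abel
    _ ≤ ‖((An n) ^ n) z - winf‖ + ‖((An n) ^ n) y‖ := norm_add_le _ _
    _ < ε := by linarith [hzpart, hy, hSig2, hDn, harith, hε]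
end

section
/- Let M ∈ B(X) be a contraction on a Banach space. If (Mⁿ) converges in operator norm to some operator P, then there exist C > 0 and 0 ≤ δ̃ < 1 such that ‖Mⁿ − P‖ ≤ C δ̃^{n+1} for all n. (Uniform power-convergence of a contraction is automatically exponentially fast.) -/
open Filter

/-- If a contraction `M` on a Banach space is uniformly power-convergent,
i.e. `Mⁿ → P` in operator norm, then the convergence is automatically exponentially
fast: there are `C > 0` and `0 ≤ δ < 1` with `‖Mⁿ - P‖ ≤ C δ^{n+1}` for all `n`. -/
theorem stmt15 {X : Type*} [NormedAddCommGroup X] [NormedSpace ℂ X] [CompleteSpace X]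
    (M P : X →L[ℂ] X) (hM : ‖M‖ ≤ 1)
    (hconv : Tendsto (fun n : ℕ => M ^ n) atTop (nhds P)) :
    ∃ C > 0, ∃ δ : ℝ, 0 ≤ δ ∧ δ < 1 ∧ ∀ n : ℕ, ‖M ^ n - P‖ ≤ C * δ ^ (n + 1) := by
  -- Step 1: P is a projection commuting with M.
  have hMP : M * P = P := by
    have h1 : Tendsto (fun n : ℕ => M * M ^ n) atTop (nhds (M * P)) :=
      (continuous_mul_left M).continuousAt.tendsto.comp hconv
    have h2 : Tendsto (fun n : ℕ => M * M ^ n) atTop (nhds P) := by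
      have := hconv.comp (tendsto_add_atTop_nat 1)
      simpa [Function.comp_def, pow_succ'] using this
    exact tendsto_nhds_unique h1 h2
  have hPM : P * M = P := by
    have h1 : Tendsto (fun n : ℕ => M ^ n * M) atTop (nhds (P * M)) :=
      (continuous_mul_right M).continuousAt.tendsto.comp hconv
    have h2 : Tendsto (fun n : ℕ => M ^ n * M) atTop (nhds P) := by
      have := hconv.comp (tendsto_add_atTop_nat 1)
      simpa [Function.comp_def, pow_succ] using this
    exact tendsto_nhds_unique h1 h2
  have hMnP : ∀ n : ℕ, M ^ n * P = P := by
    intro n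
    induction n with
    | zero => simp
    | succ k ih => rw [pow_succ, mul_assoc, hMP, ih]
  have hPP : P * P = P := by
    have h1 : Tendsto (fun n : ℕ => M ^ n * P) atTop (nhds (P * P)) :=
      (continuous_mul_right P).continuousAt.tendsto.comp hconv
    have h2 : Tendsto (fun n : ℕ => M ^ n * P) atTop (nhds P) := by
      simp only [hMnP]; exact tendsto_const_nhds
    exact tendsto_nhds_unique h1 h2
  set Q : X →L[ℂ] X := M - P with hQ
  have hQpow : ∀ n : ℕ, Q ^ (n + 1) = M ^ (n + 1) - P := by
    intro n
    induction n with
    | zero => simp [hQ]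
    | succ k ih =>
        rw [pow_succ, ih, hQ]
        rw [sub_mul, mul_sub, mul_sub, hMnP, hPM, hPP, ← pow_succ]
        abel
  -- Step 2: pick N with ‖Q^(N+1)‖ ≤ 1/2.
  have htend : Tendsto (fun n : ℕ => ‖M ^ n - P‖) atTop (nhds 0) := by
    simpa using (tendsto_iff_norm_sub_tendsto_zero.mp hconv)
  obtain ⟨N, hN, hN1⟩ :=
    ((htend.eventually (eventually_le_nhds (by norm_num : (0:ℝ) < 1/2))).and
      (eventually_ge_atTop 1)).exists
  -- hN : ‖M ^ N - P‖ ≤ 1/2, hN1 : 1 ≤ N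
  have hQN : ‖Q ^ N‖ ≤ 1/2 := by
    obtain ⟨m, rfl⟩ := Nat.exists_eq_add_of_le' hN1
    rw [hQpow m]
    exact hN
  -- δ = (1/2)^(1/N)
  set δ : ℝ := (1/2 : ℝ) ^ ((N : ℝ)⁻¹) with hδdef
  have hNpos : (0:ℝ) < N := by exact_mod_cast hN1
  have hδpos : 0 < δ := Real.rpow_pos_of_pos (by norm_num) _
  have hδlt : δ < 1 := by
    apply Real.rpow_lt_one (by norm_num) (by norm_num)
    positivity
  have hδN : δ ^ N = 1/2 := by
    rw [hδdef, ← Real.rpow_natCast ((1/2 : ℝ) ^ ((N : ℝ)⁻¹)) N, ← Real.rpow_mul (by norm_num),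
      inv_mul_cancel₀ (ne_of_gt hNpos), Real.rpow_one]
  -- K bounds ‖Q^r‖ for r ≤ N
  have hpow_le : ∀ (A : X →L[ℂ] X) (r : ℕ), ‖A ^ r‖ ≤ ‖A‖ ^ r := by
    intro A r
    induction r with
    | zero => simpa [ContinuousLinearMap.one_def] using ContinuousLinearMap.norm_id_le
    | succ k ih =>
        rw [pow_succ, pow_succ]
        exact (norm_mul_le _ _).trans (mul_le_mul_of_nonneg_right ih (norm_nonneg _))
  set K : ℝ := (max 1 ‖Q‖) ^ N with hK
  have hK1 : 1 ≤ K := one_le_pow₀ (le_max_left _ _)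
  have hQr : ∀ r : ℕ, r ≤ N → ‖Q ^ r‖ ≤ K := by
    intro r hr
    calc ‖Q ^ r‖ ≤ ‖Q‖ ^ r := hpow_le Q r
    _ ≤ (max 1 ‖Q‖) ^ r := pow_le_pow_left₀ (norm_nonneg _) (le_max_right _ _) r
    _ ≤ K := pow_le_pow_right₀ (le_max_left _ _) hr
  -- main geometric bound
  have hmain : ∀ n : ℕ, 1 ≤ n → ‖Q ^ n‖ ≤ 2 * K * δ ^ n := by
    intro n _
    obtain ⟨q, r, hrN, hn⟩ : ∃ q r, r < N ∧ n = N * q + r :=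
      ⟨n / N, n % N, Nat.mod_lt _ (by omega), (Nat.div_add_mod n N).symm ▸ rfl⟩
    have hsplit : Q ^ n = (Q ^ N) ^ q * Q ^ r := by
      rw [hn, pow_add, pow_mul]
    have h1 : ‖Q ^ n‖ ≤ (1/2 : ℝ) ^ q * K := by
      rw [hsplit]
      calc ‖(Q ^ N) ^ q * Q ^ r‖ ≤ ‖(Q ^ N) ^ q‖ * ‖Q ^ r‖ := norm_mul_le _ _
      _ ≤ ‖Q ^ N‖ ^ q * K := by
          exact mul_le_mul (hpow_le _ q) (hQr r hrN.le) (norm_nonneg _) (by positivity)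
      _ ≤ (1/2 : ℝ) ^ q * K :=
          mul_le_mul_of_nonneg_right (pow_le_pow_left₀ (norm_nonneg _) hQN q)
            (by positivity)
    have h2 : (1/2 : ℝ) ^ q ≤ 2 * δ ^ n := by
      have hδr : δ ^ N ≤ δ ^ r := pow_le_pow_of_le_one hδpos.le hδlt.le hrN.le
      have : δ ^ n = δ ^ (N * q) * δ ^ r := by rw [hn, pow_add]
      have hNq : δ ^ (N * q) = (1/2 : ℝ) ^ q := by rw [pow_mul, hδN]
      calc (1/2 : ℝ) ^ q = 2 * ((1/2 : ℝ) ^ q * (1/2 : ℝ)) := by ring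
      _ = 2 * (δ ^ (N * q) * δ ^ N) := by rw [hNq, hδN]
      _ ≤ 2 * (δ ^ (N * q) * δ ^ r) := by
          have := mul_le_mul_of_nonneg_left hδr (pow_nonneg hδpos.le (N * q))
          linarith
      _ = 2 * δ ^ n := by rw [this]
    calc ‖Q ^ n‖ ≤ (1/2 : ℝ) ^ q * K := h1
    _ ≤ (2 * δ ^ n) * K := mul_le_mul_of_nonneg_right h2 (by positivity)
    _ = 2 * K * δ ^ n := by ring
  -- conclude
  refine ⟨(2 * K + ‖(1 : X →L[ℂ] X) - P‖ + 1) / δ, by positivity, δ, hδpos.le, hδlt, ?_⟩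
  intro n
  have hCδ : ((2 * K + ‖(1 : X →L[ℂ] X) - P‖ + 1) / δ) * δ
      = 2 * K + ‖(1 : X →L[ℂ] X) - P‖ + 1 := div_mul_cancel₀ _ (ne_of_gt hδpos)
  match n with
  | 0 =>
      have h0 : ((2 * K + ‖(1 : X →L[ℂ] X) - P‖ + 1) / δ) * δ ^ (0 + 1)
          = 2 * K + ‖(1 : X →L[ℂ] X) - P‖ + 1 := by rw [pow_one]; exact hCδ
      rw [pow_zero, h0]
      linarith
  | (m+1) =>
      have := hmain (m+1) (by omega)
      rw [hQpow m] at this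
      have hpow : ((2 * K + ‖(1 : X →L[ℂ] X) - P‖ + 1) / δ) * δ ^ (m + 1 + 1)
          = (2 * K + ‖(1 : X →L[ℂ] X) - P‖ + 1) * δ ^ (m + 1) := by
        rw [pow_succ']
        field_simp
      rw [hpow]
      nlinarith [norm_nonneg ((1 : X →L[ℂ] X) - P), pow_nonneg hδpos.le (m+1)]
end

section
/- Let M ∈ B(X) be a contraction, 0 ≤ δ < 1, and suppose Spec(M) ⊆ B_δ ∪ {λ₁,…,λ_J} with |λ_j| = 1 and all quasi-nilpotent parts zero. Let ℒ ∈ B(X) generate a contraction semigroup. Then there exists ε > 0 (depending on ‖ℒ‖ and the resolvent bound of M outside the spectral contours) such that for all t ∈ [0, ε] and all z in the closed disk of radius 3/2 outside the contour regions Ω, z lies in the resolvent set of M e^{tℒ}, and sup_{(t,z) ∈ [0,ε]×(B_{3/2}∖Ω)} ‖(z − M e^{tℒ})⁻¹‖ < ∞. -/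
open Metric

lemma aux_pert {X : Type*} [NormedAddCommGroup X] [NormedSpace ℂ X] [CompleteSpace X]
    (u : (X →L[ℂ] X)ˣ) (b : X →L[ℂ] X) (R0 : ℝ) (hR0 : 0 ≤ R0)
    (hR : ‖(↑u⁻¹ : X →L[ℂ] X)‖ ≤ R0) (hb : ‖b‖ ≤ (2 * (R0 + 1))⁻¹) :
    IsUnit ((↑u : X →L[ℂ] X) - b) ∧
      ‖Ring.inverse ((↑u : X →L[ℂ] X) - b)‖ ≤ 2 * R0 := by
  set x : X →L[ℂ] X := (↑u⁻¹ : X →L[ℂ] X) * b with hx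
  have hxle : ‖x‖ ≤ 1 / 2 := by
    calc ‖x‖ ≤ ‖(↑u⁻¹ : X →L[ℂ] X)‖ * ‖b‖ := norm_mul_le _ _
    _ ≤ R0 * (2 * (R0 + 1))⁻¹ := by
        apply mul_le_mul hR hb (norm_nonneg _) hR0
    _ ≤ 1 / 2 := by
        rw [div_eq_mul_inv, ← div_eq_mul_inv, ← div_eq_mul_inv,
          div_le_div_iff₀ (by positivity) (by norm_num)]
        nlinarith
  have hxlt : ‖x‖ < 1 := lt_of_le_of_lt hxle (by norm_num)
  have key : (↑u : X →L[ℂ] X) - b = ↑u * (1 - x) := by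
    rw [mul_sub, mul_one, hx, ← mul_assoc, Units.mul_inv, one_mul]
  set v : (X →L[ℂ] X)ˣ := Units.oneSub x hxlt with hv
  have hunit : IsUnit ((↑u : X →L[ℂ] X) - b) := by
    rw [key]; exact (u.isUnit.mul v.isUnit)
  refine ⟨hunit, ?_⟩
  have key2 : (↑u : X →L[ℂ] X) - b = ↑(u * v) := by rw [key]; rfl
  rw [key2, Ring.inverse_unit]
  have : ((u * v)⁻¹ : (X →L[ℂ] X)ˣ) = v⁻¹ * u⁻¹ := by rw [mul_inv_rev]
  rw [this]
  have hvinv : ‖(↑v⁻¹ : X →L[ℂ] X)‖ ≤ 2 := by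
    have : (↑v⁻¹ : X →L[ℂ] X) = ∑' n : ℕ, x ^ n := rfl
    rw [this]
    calc ‖∑' n : ℕ, x ^ n‖ ≤ ‖(1 : X →L[ℂ] X)‖ - 1 + (1 - ‖x‖)⁻¹ :=
        tsum_geometric_le_of_norm_lt_one x hxlt
    _ ≤ 2 := by
        have h1 : ‖(1 : X →L[ℂ] X)‖ ≤ 1 := ContinuousLinearMap.norm_id_le
        have h2 : (1 - ‖x‖)⁻¹ ≤ 2 := by
          rw [inv_le_comm₀ (by linarith) (by norm_num)]
          linarith
        linarith
  calc ‖(↑v⁻¹ : X →L[ℂ] X) * (↑u⁻¹ : X →L[ℂ] X)‖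
      ≤ ‖(↑v⁻¹ : X →L[ℂ] X)‖ * ‖(↑u⁻¹ : X →L[ℂ] X)‖ := norm_mul_le _ _
  _ ≤ 2 * R0 := mul_le_mul hvinv hR (norm_nonneg _) (by norm_num)



/-- Uniform resolvent bound for the perturbed operator `M e^{tL}`. Let
`M` be a contraction with `Spec(M) ⊆ B_δ ∪ {λ₁, …, λ_J}`, `|λ_j| = 1`, `δ < 1`, whose
quasi-nilpotent parts at the `λ_j` (defined via the Riesz projections `P_j`) vanish,
and let `L` be a bounded generator of a contraction semigroup. Let `Ω` be the union
of the interiors of the separating contours: small open balls around each `λ_j`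
together with the open ball of radius `δ'` (with `δ < δ' < 1`) around `0`. Then there
exists `ε > 0` such that for all `t ∈ [0, ε]` and all `z` in the closed disk of
radius `3/2` outside `Ω`, `z` lies in the resolvent set of `M e^{tL}`, and the
resolvent norm is uniformly bounded there. -/
theorem stmt16 {X : Type*} [NormedAddCommGroup X] [NormedSpace ℂ X] [CompleteSpace X]
    (M : X →L[ℂ] X) (hM : ‖M‖ ≤ 1)
    (J : ℕ) (lam : Fin J → ℂ) (hlam : ∀ j, ‖lam j‖ = 1)
    (δ : ℝ) (hδ0 : 0 ≤ δ) (hδ1 : δ < 1)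
    (hspec : spectrum ℂ M ⊆ Metric.closedBall 0 δ ∪ Set.range lam)
    (r : Fin J → ℝ) (hr : ∀ j, 0 < r j)
    (hsep : ∀ j, spectrum ℂ M ∩ Metric.closedBall (lam j) (r j) = {lam j})
    (hNil : ∀ j, (algebraMap ℂ (X →L[ℂ] X) (lam j) - M) *
      ((2 * (Real.pi : ℂ) * Complex.I)⁻¹ •
        (∮ z in C(lam j, r j), Ring.inverse (algebraMap ℂ (X →L[ℂ] X) z - M))) = 0)
    (L : X →L[ℂ] X)
    (hL : ∀ s : ℝ, 0 ≤ s → ‖NormedSpace.exp (s • L)‖ ≤ 1)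
    (δ' : ℝ) (hδ'1 : δ < δ') (hδ'2 : δ' < 1)
    (hballs : ∀ j, Disjoint (Metric.ball (lam j) (r j)) (Metric.closedBall (0 : ℂ) δ'))
    (hballs2 : ∀ j l, j ≠ l → Disjoint (Metric.ball (lam j) (r j)) (Metric.ball (lam l) (r l))) :
    ∃ ε > 0, ∃ C : ℝ, ∀ t ∈ Set.Icc (0 : ℝ) ε,
      ∀ z ∈ Metric.closedBall (0 : ℂ) (3 / 2) \
          (Metric.ball (0 : ℂ) δ' ∪ ⋃ j, Metric.ball (lam j) (r j)),
        IsUnit (algebraMap ℂ (X →L[ℂ] X) z - M * NormedSpace.exp (t • L)) ∧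
        ‖Ring.inverse (algebraMap ℂ (X →L[ℂ] X) z - M * NormedSpace.exp (t • L))‖ ≤ C := by
  set S : Set ℂ := Metric.closedBall (0 : ℂ) (3 / 2) \
      (Metric.ball (0 : ℂ) δ' ∪ ⋃ j, Metric.ball (lam j) (r j)) with hS
  -- S is compact
  have hScomp : IsCompact S :=
    (isCompact_closedBall _ _).diff
      (isOpen_ball.union (isOpen_iUnion fun j => isOpen_ball))
  -- every z in S is in the resolvent set of M
  have hSres : ∀ z ∈ S, IsUnit (algebraMap ℂ (X →L[ℂ] X) z - M) := by
    intro z hz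
    by_contra hzu
    have hzs : z ∈ spectrum ℂ M := hzu
    rcases hspec hzs with h | ⟨j, hj⟩
    · have : z ∈ Metric.ball (0 : ℂ) δ' :=
        mem_ball.mpr (lt_of_le_of_lt (mem_closedBall.mp h) hδ'1)
      exact hz.2 (Or.inl this)
    · have : z ∈ ⋃ j, Metric.ball (lam j) (r j) :=
        Set.mem_iUnion.mpr ⟨j, by simp [← hj, hr j]⟩
      exact hz.2 (Or.inr this)
  -- resolvent is continuous on S, hence bounded
  have hgcont : ContinuousOn (fun z : ℂ => Ring.inverse (algebraMap ℂ (X →L[ℂ] X) z - M)) S := by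
    intro z hz
    apply ContinuousAt.continuousWithinAt
    have h1 : ContinuousAt (fun z : ℂ => algebraMap ℂ (X →L[ℂ] X) z - M) z := by
      apply Continuous.continuousAt
      exact ((algebraMapCLM ℂ (X →L[ℂ] X)).continuous).sub continuous_const
    have h2 : ContinuousAt Ring.inverse (algebraMap ℂ (X →L[ℂ] X) z - M) := by
      have := NormedRing.inverse_continuousAt (hSres z hz).unit
      rwa [IsUnit.unit_spec] at this
    exact ContinuousAt.comp (g := Ring.inverse) h2 h1
  obtain ⟨R, hRbound⟩ := hScomp.exists_bound_of_continuousOn hgcont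
  set R0 : ℝ := max R 0 with hR0def
  have hR0 : 0 ≤ R0 := le_max_right _ _
  -- choose ε via continuity of exp at 0
  have hexpcont : ContinuousAt (fun t : ℝ => NormedSpace.exp (t • L)) 0 := by
    apply Continuous.continuousAt
    exact (continuous_iff_continuousAt.mpr fun x => (NormedSpace.exp_analytic (𝕂 := ℂ) x).continuousAt).comp (continuous_id.smul continuous_const)
  have htarget : (0 : ℝ) < (2 * (R0 + 1))⁻¹ := by positivity
  rw [Metric.continuousAt_iff] at hexpcont
  obtain ⟨ε₀, hε₀, hε₀close⟩ := hexpcont ((2 * (R0 + 1))⁻¹) htarget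
  refine ⟨ε₀ / 2, by linarith, 2 * R0, ?_⟩
  intro t ht z hz
  -- E close to 1
  have hEclose : ‖NormedSpace.exp (t • L) - 1‖ ≤ (2 * (R0 + 1))⁻¹ := by
    have hd : dist t 0 < ε₀ := by
      rw [Real.dist_eq, sub_zero, abs_of_nonneg ht.1]
      linarith [ht.2]
    have := hε₀close hd
    rw [dist_eq_norm] at this
    simp only [zero_smul, NormedSpace.exp_zero] at this
    exact this.le
  set u : (X →L[ℂ] X)ˣ := (hSres z hz).unit with hu
  have huval : (↑u : X →L[ℂ] X) = algebraMap ℂ (X →L[ℂ] X) z - M := (hSres z hz).unit_spec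
  have huinv : ‖(↑u⁻¹ : X →L[ℂ] X)‖ ≤ R0 := by
    have h1 : Ring.inverse (algebraMap ℂ (X →L[ℂ] X) z - M) = (↑u⁻¹ : X →L[ℂ] X) := by
      rw [← huval, Ring.inverse_unit]
    have := hRbound z hz
    rw [h1] at this
    exact this.trans (le_max_left _ _)
  set b : X →L[ℂ] X := M * (NormedSpace.exp (t • L) - 1) with hb
  have hbnorm : ‖b‖ ≤ (2 * (R0 + 1))⁻¹ := by
    calc ‖b‖ ≤ ‖M‖ * ‖NormedSpace.exp (t • L) - 1‖ := norm_mul_le _ _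
    _ ≤ 1 * ((2 * (R0 + 1))⁻¹) := mul_le_mul hM hEclose (norm_nonneg _) zero_le_one
    _ = (2 * (R0 + 1))⁻¹ := one_mul _
  have hkey : algebraMap ℂ (X →L[ℂ] X) z - M * NormedSpace.exp (t • L)
      = (↑u : X →L[ℂ] X) - b := by
    rw [huval, hb]
    noncomm_ring
  obtain ⟨h1, h2⟩ := aux_pert u b R0 hR0 huinv hbnorm
  rw [hkey]
  exact ⟨h1, h2⟩
end
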